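/- arXiv:2310.00345 — 10 statements merged into one kernel-verified Lean document; each statement's English description precedes it below -/
import Mathlib

section
/- If a finite group G is the product of two abelian subgroups A and B, then the derived subgroup G' of G is abelian (i.e., G is metabelian). -/
open Pointwise

private lemma swc {G : Type*} [Group G] {x y : G} (h : x * y = y * x) :
    y⁻¹ * x * y = x := by
  rw [mul_assoc, h]; group

private lemma swc' {G : Type*} [Group G] {x y : G} (h : x * y = y * x) :
    y * x * y⁻¹ = x := by
  rw [← h]; group

theorem stmt1 {G : Type*} [Group G] [Finite G] (A B : Subgroup G)
    (hprod : (A : Set G) * (B : Set G) = Set.univ)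
    (hA : ∀ x ∈ A, ∀ y ∈ A, x * y = y * x)
    (hB : ∀ x ∈ B, ∀ y ∈ B, x * y = y * x) :
    ∀ x ∈ commutator G, ∀ y ∈ commutator G, x * y = y * x := by
  -- decomposition lemmas
  have decompAB : ∀ g : G, ∃ a ∈ A, ∃ b ∈ B, g = a * b := by
    intro g
    have hg : g ∈ (A : Set G) * (B : Set G) := by rw [hprod]; exact Set.mem_univ g
    obtain ⟨a, ha, b, hb, hab⟩ := Set.mem_mul.mp hg
    exact ⟨a, ha, b, hb, hab.symm⟩
  have decompBA : ∀ g : G, ∃ b ∈ B, ∃ a ∈ A, g = b * a := by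
    intro g
    obtain ⟨a, ha, b, hb, h⟩ := decompAB g⁻¹
    exact ⟨b⁻¹, inv_mem hb, a⁻¹, inv_mem ha, by rw [← mul_inv_rev, ← h, inv_inv]⟩
  -- Itô's key computation: commutators [a,b], [c,d] (a,c ∈ A, b,d ∈ B) commute
  have key : ∀ a ∈ A, ∀ b ∈ B, ∀ c ∈ A, ∀ d ∈ B,
      (a⁻¹ * b⁻¹ * a * b) * (c⁻¹ * d⁻¹ * c * d)
        = (c⁻¹ * d⁻¹ * c * d) * (a⁻¹ * b⁻¹ * a * b) := by
    intro a ha b hb c hc d hd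
    obtain ⟨a₁, ha₁, b₁, hb₁, e1⟩ := decompAB (c * b * c⁻¹)
    obtain ⟨b₂, hb₂, a₂, ha₂, e2⟩ := decompBA (d * a * d⁻¹)
    have S1 : c * (a⁻¹ * b⁻¹ * a * b) * c⁻¹ = a⁻¹ * b₁⁻¹ * a * b₁ := by
      calc c * (a⁻¹ * b⁻¹ * a * b) * c⁻¹
          = (c * a * c⁻¹)⁻¹ * (c * b * c⁻¹)⁻¹ * (c * a * c⁻¹) * (c * b * c⁻¹) := by group
        _ = a⁻¹ * (a₁ * b₁)⁻¹ * a * (a₁ * b₁) := by rw [e1, swc' (hA a ha c hc)]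
        _ = a⁻¹ * b₁⁻¹ * (a₁⁻¹ * a * a₁) * b₁ := by group
        _ = a⁻¹ * b₁⁻¹ * a * b₁ := by rw [swc (hA a ha a₁ ha₁)]
    have S2 : d * (a⁻¹ * b₁⁻¹ * a * b₁) * d⁻¹ = a₂⁻¹ * b₁⁻¹ * a₂ * b₁ := by
      have h1 : b₁⁻¹ * b₂ = b₂ * b₁⁻¹ := (Commute.inv_left (hB b₁ hb₁ b₂ hb₂)).eq
      calc d * (a⁻¹ * b₁⁻¹ * a * b₁) * d⁻¹
          = (d * a * d⁻¹)⁻¹ * (d * b₁ * d⁻¹)⁻¹ * (d * a * d⁻¹) * (d * b₁ * d⁻¹) := by group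
        _ = (b₂ * a₂)⁻¹ * b₁⁻¹ * (b₂ * a₂) * b₁ := by rw [e2, swc' (hB b₁ hb₁ d hd)]
        _ = a₂⁻¹ * (b₂⁻¹ * b₁⁻¹ * b₂) * (a₂ * b₁) := by group
        _ = a₂⁻¹ * b₁⁻¹ * (a₂ * b₁) := by rw [swc h1]
        _ = a₂⁻¹ * b₁⁻¹ * a₂ * b₁ := by group
    have e3 : c⁻¹ * b₁ * c = a₁⁻¹ * b := by
      have hb1 : b₁ = a₁⁻¹ * (c * b * c⁻¹) := by rw [e1]; group
      have h1 : a₁⁻¹ * c = c * a₁⁻¹ := (Commute.inv_left (hA a₁ ha₁ c hc)).eq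
      rw [hb1]
      calc c⁻¹ * (a₁⁻¹ * (c * b * c⁻¹)) * c = (c⁻¹ * a₁⁻¹ * c) * b := by group
        _ = a₁⁻¹ * b := by rw [swc h1]
    have e4 : d⁻¹ * a₂ * d = b₂⁻¹ * a := by
      have ha2 : a₂ = b₂⁻¹ * (d * a * d⁻¹) := by rw [e2]; group
      have h1 : b₂⁻¹ * d = d * b₂⁻¹ := (Commute.inv_left (hB b₂ hb₂ d hd)).eq
      rw [ha2]
      calc d⁻¹ * (b₂⁻¹ * (d * a * d⁻¹)) * d = (d⁻¹ * b₂⁻¹ * d) * a := by group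
        _ = b₂⁻¹ * a := by rw [swc h1]
    have S3 : c⁻¹ * (a₂⁻¹ * b₁⁻¹ * a₂ * b₁) * c = a₂⁻¹ * b⁻¹ * a₂ * b := by
      calc c⁻¹ * (a₂⁻¹ * b₁⁻¹ * a₂ * b₁) * c
          = (c⁻¹ * a₂ * c)⁻¹ * (c⁻¹ * b₁ * c)⁻¹ * (c⁻¹ * a₂ * c) * (c⁻¹ * b₁ * c) := by group
        _ = a₂⁻¹ * (a₁⁻¹ * b)⁻¹ * a₂ * (a₁⁻¹ * b) := by rw [e3, swc (hA a₂ ha₂ c hc)]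
        _ = a₂⁻¹ * b⁻¹ * (a₁ * a₂ * a₁⁻¹) * b := by group
        _ = a₂⁻¹ * b⁻¹ * a₂ * b := by rw [swc' (hA a₂ ha₂ a₁ ha₁)]
    have S4 : d⁻¹ * (a₂⁻¹ * b⁻¹ * a₂ * b) * d = a⁻¹ * b⁻¹ * a * b := by
      have h1 : b⁻¹ * b₂ = b₂ * b⁻¹ := (Commute.inv_left (hB b hb b₂ hb₂)).eq
      calc d⁻¹ * (a₂⁻¹ * b⁻¹ * a₂ * b) * d
          = (d⁻¹ * a₂ * d)⁻¹ * (d⁻¹ * b * d)⁻¹ * (d⁻¹ * a₂ * d) * (d⁻¹ * b * d) := by group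
        _ = (b₂⁻¹ * a)⁻¹ * b⁻¹ * (b₂⁻¹ * a) * b := by rw [e4, swc (hB b hb d hd)]
        _ = a⁻¹ * (b₂ * b⁻¹ * b₂⁻¹) * (a * b) := by group
        _ = a⁻¹ * b⁻¹ * (a * b) := by rw [swc' h1]
        _ = a⁻¹ * b⁻¹ * a * b := by group
    have hconj : (c⁻¹ * d⁻¹ * c * d)⁻¹ * (a⁻¹ * b⁻¹ * a * b) * (c⁻¹ * d⁻¹ * c * d)
        = a⁻¹ * b⁻¹ * a * b := by
      calc (c⁻¹ * d⁻¹ * c * d)⁻¹ * (a⁻¹ * b⁻¹ * a * b) * (c⁻¹ * d⁻¹ * c * d)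
          = d⁻¹ * (c⁻¹ * (d * (c * (a⁻¹ * b⁻¹ * a * b) * c⁻¹) * d⁻¹) * c) * d := by group
        _ = d⁻¹ * (c⁻¹ * (d * (a⁻¹ * b₁⁻¹ * a * b₁) * d⁻¹) * c) * d := by rw [S1]
        _ = d⁻¹ * (c⁻¹ * (a₂⁻¹ * b₁⁻¹ * a₂ * b₁) * c) * d := by rw [S2]
        _ = d⁻¹ * (a₂⁻¹ * b⁻¹ * a₂ * b) * d := by rw [S3]
        _ = a⁻¹ * b⁻¹ * a * b := S4
    calc (a⁻¹ * b⁻¹ * a * b) * (c⁻¹ * d⁻¹ * c * d)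
        = (c⁻¹ * d⁻¹ * c * d) *
            ((c⁻¹ * d⁻¹ * c * d)⁻¹ * (a⁻¹ * b⁻¹ * a * b) * (c⁻¹ * d⁻¹ * c * d)) := by group
      _ = (c⁻¹ * d⁻¹ * c * d) * (a⁻¹ * b⁻¹ * a * b) := by rw [hconj]
  -- conjugation by elements of B preserves the set of mixed commutators
  have conjB : ∀ e ∈ B, ∀ a ∈ A, ∃ a' ∈ A, ∀ b ∈ B,
      e⁻¹ * (a⁻¹ * b⁻¹ * a * b) * e = a'⁻¹ * b⁻¹ * a' * b := by
    intro e he a ha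
    obtain ⟨b₂, hb₂, a₂, ha₂, e2⟩ := decompBA (e⁻¹ * a * e)
    refine ⟨a₂, ha₂, fun b hb => ?_⟩
    have h1 : b⁻¹ * b₂ = b₂ * b⁻¹ := (Commute.inv_left (hB b hb b₂ hb₂)).eq
    calc e⁻¹ * (a⁻¹ * b⁻¹ * a * b) * e
        = (e⁻¹ * a * e)⁻¹ * (e⁻¹ * b * e)⁻¹ * (e⁻¹ * a * e) * (e⁻¹ * b * e) := by group
      _ = (b₂ * a₂)⁻¹ * b⁻¹ * (b₂ * a₂) * b := by rw [e2, swc (hB b hb e he)]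
      _ = a₂⁻¹ * (b₂⁻¹ * b⁻¹ * b₂) * (a₂ * b) := by group
      _ = a₂⁻¹ * b⁻¹ * (a₂ * b) := by rw [swc h1]
      _ = a₂⁻¹ * b⁻¹ * a₂ * b := by group
  set Kset : Set G := {x | ∃ a ∈ A, ∃ b ∈ B, x = a⁻¹ * b⁻¹ * a * b} with hKdef
  set N : Subgroup G := Subgroup.closure Kset with hNdef
  have hmemN : ∀ g h : G, g⁻¹ * h⁻¹ * g * h ∈ N := by
    intro g h
    obtain ⟨a, ha, b, hb, rfl⟩ := decompAB g
    obtain ⟨c, hc, d, hd, rfl⟩ := decompAB h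
    obtain ⟨a', ha', hu⟩ := conjB b hb a ha
    obtain ⟨c', hc', hv⟩ := conjB d hd c hc
    have hu' := hu d hd
    have hv' := hv b hb
    have hdb : d * b * d⁻¹ = b := swc' (hB b hb d hd)
    have hac : a * c⁻¹ = c⁻¹ * a := (Commute.inv_right (hA a ha c hc)).eq
    have hX : (b⁻¹ * (a⁻¹ * d⁻¹ * a * d) * b) * (d⁻¹ * (c⁻¹ * b⁻¹ * c * b) * d)⁻¹
        = (a * b)⁻¹ * (c * d)⁻¹ * (a * b) * (c * d) := by
      calc (b⁻¹ * (a⁻¹ * d⁻¹ * a * d) * b) * (d⁻¹ * (c⁻¹ * b⁻¹ * c * b) * d)⁻¹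
          = b⁻¹ * a⁻¹ * d⁻¹ * a * ((d * b * d⁻¹) * (b⁻¹ * c⁻¹ * b * c) * d) := by group
        _ = b⁻¹ * a⁻¹ * d⁻¹ * a * (b * (b⁻¹ * c⁻¹ * b * c) * d) := by rw [hdb]
        _ = b⁻¹ * a⁻¹ * d⁻¹ * ((a * c⁻¹) * (b * (c * d))) := by group
        _ = b⁻¹ * a⁻¹ * d⁻¹ * ((c⁻¹ * a) * (b * (c * d))) := by rw [hac]
        _ = (a * b)⁻¹ * (c * d)⁻¹ * (a * b) * (c * d) := by group
    rw [← hX]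
    exact mul_mem (Subgroup.subset_closure ⟨a', ha', d, hd, hu'⟩)
      (inv_mem (Subgroup.subset_closure ⟨c', hc', b, hb, hv'⟩))
  have hcommle : commutator G ≤ N := by
    rw [commutator_def]
    exact Subgroup.commutator_le.mpr fun g _ h _ => by
      simpa only [inv_inv, commutatorElement_def] using hmemN g⁻¹ h⁻¹
  have habel : ∀ x ∈ N, ∀ y ∈ N, x * y = y * x := by
    intro x hx y hy
    refine Subgroup.closure_induction₂ (p := fun x y _ _ => x * y = y * x)
      ?_ ?_ ?_ ?_ ?_ ?_ ?_ hx hy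
    · rintro u v ⟨a, ha, b, hb, rfl⟩ ⟨c, hc, d, hd, rfl⟩
      exact key a ha b hb c hc d hd
    · intro z _; rw [one_mul, mul_one]
    · intro z _; rw [one_mul, mul_one]
    · intro u v w _ _ _ h1 h2
      rw [mul_assoc, h2, ← mul_assoc, h1, mul_assoc]
    · intro v w u _ _ _ h1 h2
      rw [← mul_assoc, h1, mul_assoc, h2, ← mul_assoc]
    · intro u v _ _ h
      exact (Commute.inv_left h).eq
    · intro u v _ _ h
      exact (Commute.inv_right h).eq
  intro x hx y hy
  exact habel x (hcommle hx) y (hcommle hy)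
end

section
/- Let G = AB be a finite group where A and B are subgroups, and let p be a prime. If A_p ∈ Syl_p(A) and B_p ∈ Syl_p(B) are chosen such that A_p B_p is a subgroup, then A_p B_p is a Sylow p-subgroup of G. More precisely, there exist Sylow p-subgroups A_p of A and B_p of B such that A_p B_p is a Sylow p-subgroup of G. -/
open Pointwise

lemma card_set_mul_card_inf {G : Type*} [Group G] [Finite G] (H K : Subgroup G) :
    Nat.card ((H : Set G) * (K : Set G)) * Nat.card (H ⊓ K : Subgroup G) =
      Nat.card H * Nat.card K := by
  obtain ⟨S, hS, -⟩ := Subgroup.exists_isComplement_left (K.subgroupOf H) 1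
  replace hS : Subgroup.IsComplement S ((K.subgroupOf H : Subgroup H) : Set H) := hS
  have hmem : ∀ x : S × K, ((x.1.1 : G) * (x.2 : G)) ∈ (H : Set G) * (K : Set G) :=
    fun x => Set.mul_mem_mul (x.1.1).2 x.2.2
  have hbij : Function.Bijective
      (fun x : S × K => (⟨(x.1.1 : G) * (x.2 : G), hmem x⟩ :
        ((H : Set G) * (K : Set G) : Set G))) := by
    constructor
    · rintro ⟨⟨s₁, hs₁⟩, k₁⟩ ⟨⟨s₂, hs₂⟩, k₂⟩ h
      simp only [Subtype.mk_eq_mk] at h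
      have hd : (s₂⁻¹ * s₁ : H) ∈ K.subgroupOf H := by
        have : ((s₂⁻¹ * s₁ : H) : G) = (k₂ : G) * (k₁ : G)⁻¹ := by
          push_cast
          rw [eq_comm, mul_inv_eq_iff_eq_mul, mul_assoc, eq_comm, inv_mul_eq_iff_eq_mul]
          exact h
        rw [Subgroup.mem_subgroupOf, this]
        exact K.mul_mem k₂.2 (K.inv_mem k₁.2)
      have key := hS.1 (a₁ := (⟨⟨s₁, hs₁⟩, 1⟩ : S × (K.subgroupOf H : Set H)))
        (a₂ := (⟨⟨s₂, hs₂⟩, ⟨s₂⁻¹ * s₁, hd⟩⟩ : S × (K.subgroupOf H : Set H)))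
        (by simp [mul_inv_cancel_left])
      obtain ⟨h1, h2⟩ := Prod.mk.injEq .. ▸ key
      have hs : s₁ = s₂ := congrArg (fun z => (z : H)) (Subtype.ext_iff.mp h1)
      have hcs : (s₁ : G) = (s₂ : G) := congrArg _ hs
      have hk : k₁ = k₂ := by
        rw [hcs, mul_right_inj] at h
        exact Subtype.ext h
      exact Prod.ext (Subtype.ext hs) hk
    · rintro ⟨x, hx⟩
      obtain ⟨h, hh, k, hk, rfl⟩ := hx
      obtain ⟨⟨s, d⟩, hsd⟩ := hS.2 ⟨h, hh⟩
      refine ⟨⟨s, ⟨(d : H) * k, K.mul_mem d.2 hk⟩⟩, ?_⟩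
      have : ((s : H) : G) * ((d : H) : G) = h := by
        rw [← Subgroup.coe_mul]; exact congrArg _ hsd
      simp only [Subtype.mk_eq_mk, Subtype.mk.injEq, Subgroup.coe_mul]
      exact Subtype.ext (by show _ * (_ * k) = h * k; rw [← mul_assoc, this])
  have h1 : Nat.card ((H : Set G) * (K : Set G)) = Nat.card S * Nat.card K := by
    rw [← Nat.card_prod]
    exact (Nat.card_eq_of_bijective _ hbij).symm
  have h2 : Nat.card (K.subgroupOf H) = Nat.card (H ⊓ K : Subgroup G) := by
    have e : (K.subgroupOf H).map H.subtype = H ⊓ K := by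
      rw [Subgroup.subgroupOf_map_subtype, inf_comm]
    rw [← e]
    exact Nat.card_congr (Subgroup.equivMapOfInjective _ _ H.subtype_injective).toEquiv
  have h3 : Nat.card S * Nat.card (K.subgroupOf H) = Nat.card H := hS.card_mul_card
  rw [h1, ← h3, ← h2]
  ring

theorem stmt4 {G : Type*} [Group G] [Finite G] (A B : Subgroup G) (p : ℕ) (hp : p.Prime)
    (hprod : (A : Set G) * (B : Set G) = Set.univ) :
    ∃ P Q : Subgroup G, P ≤ A ∧ Q ≤ B ∧
      IsPGroup p P ∧ ¬ p ∣ P.relIndex A ∧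
      IsPGroup p Q ∧ ¬ p ∣ Q.relIndex B ∧
      ∃ R : Subgroup G, (R : Set G) = (P : Set G) * (Q : Set G) ∧
        IsPGroup p R ∧ ¬ p ∣ R.index := by
  have hfp : Fact p.Prime := ⟨hp⟩
  classical
  obtain ⟨SA⟩ : Nonempty (Sylow p A) := inferInstance
  obtain ⟨SB⟩ : Nonempty (Sylow p B) := inferInstance
  set A₁ : Subgroup G := (SA : Subgroup A).map A.subtype with hA₁def
  set B₁ : Subgroup G := (SB : Subgroup B).map B.subtype with hB₁def
  have hA₁p : IsPGroup p A₁ := SA.2.map _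
  have hB₁p : IsPGroup p B₁ := SB.2.map _
  have hA₁A : A₁ ≤ A := Subgroup.map_subtype_le _
  have hB₁B : B₁ ≤ B := Subgroup.map_subtype_le _
  obtain ⟨S, hAS⟩ := hA₁p.exists_le_sylow
  obtain ⟨T, hBT⟩ := hB₁p.exists_le_sylow
  obtain ⟨g, hg⟩ := MulAction.exists_smul_eq G T S
  have hginv : (g : G) ∈ (A : Set G) * (B : Set G) := hprod ▸ Set.mem_univ g
  obtain ⟨a₀, ha₀, b₀, hb₀, hab⟩ := hginv
  set a := a₀⁻¹ with hadef
  set b := b₀⁻¹ with hbdef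
  have ha : a ∈ A := A.inv_mem ha₀
  have hb : b ∈ B := B.inv_mem hb₀
  set U : Sylow p G := a • S with hUdef
  have hT : T = b • U := by
    have h1 : T = g⁻¹ • S := by rw [← hg, inv_smul_smul]
    rw [h1, hUdef, ← mul_smul]
    congr 1
    rw [← hab, mul_inv_rev]
  set A₂ : Subgroup G := MulAut.conj a • A₁ with hA₂def
  have hA₂U : A₂ ≤ U.1 :=
    Subgroup.pointwise_smul_le_pointwise_smul_iff.mpr hAS
  have hA₂A : A₂ ≤ A := Subgroup.conj_smul_le_of_le hA₁A ⟨a, ha⟩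
  set B₂ : Subgroup G := MulAut.conj b⁻¹ • B₁ with hB₂def
  have hB₂U : B₂ ≤ U.1 := by
    have h1 : B₁ ≤ MulAut.conj b • U.1 := by rw [hT] at hBT; exact hBT
    have h2 : MulAut.conj b⁻¹ • B₁ ≤ MulAut.conj b⁻¹ • (MulAut.conj b • U.1) :=
      Subgroup.pointwise_smul_le_pointwise_smul_iff.mpr h1
    rwa [smul_smul, ← map_mul, inv_mul_cancel, map_one, one_smul] at h2
  have hB₂B : B₂ ≤ B := Subgroup.conj_smul_le_of_le hB₁B ⟨b⁻¹, B.inv_mem hb⟩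
  -- cardinalities
  set vA := (Nat.card A).factorization p with hvA
  set vB := (Nat.card B).factorization p with hvB
  set vG := (Nat.card G).factorization p with hvG
  set vAB := (Nat.card (A ⊓ B : Subgroup G)).factorization p with hvAB
  have key : ∀ (C D : Subgroup G), D ≤ C → IsPGroup p D →
      Nat.card D ∣ p ^ (Nat.card C).factorization p := by
    intro C D hle hD
    obtain ⟨n, hn⟩ := IsPGroup.iff_card.mp hD
    have hdvd : p ^ n ∣ Nat.card C := hn ▸ Subgroup.card_dvd_of_le hle
    have hle' : n ≤ (Nat.card C).factorization p :=
      (Nat.Prime.pow_dvd_iff_le_factorization hp Nat.card_pos.ne').mp hdvd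
    exact hn ▸ pow_dvd_pow p hle'
  have hcardA₂ : Nat.card A₂ = p ^ vA := by
    have e1 : Nat.card A₂ = Nat.card A₁ :=
      (Nat.card_congr (Subgroup.equivSMul (MulAut.conj a) A₁).toEquiv).symm
    have e2 : Nat.card A₁ = Nat.card (SA : Subgroup A) :=
      (Nat.card_congr (Subgroup.equivMapOfInjective _ _ A.subtype_injective).toEquiv).symm
    rw [e1, e2, SA.card_eq_multiplicity]
  have hcardB₂ : Nat.card B₂ = p ^ vB := by
    have e1 : Nat.card B₂ = Nat.card B₁ :=
      (Nat.card_congr (Subgroup.equivSMul (MulAut.conj b⁻¹) B₁).toEquiv).symm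
    have e2 : Nat.card B₁ = Nat.card (SB : Subgroup B) :=
      (Nat.card_congr (Subgroup.equivMapOfInjective _ _ B.subtype_injective).toEquiv).symm
    rw [e1, e2, SB.card_eq_multiplicity]
  set P : Subgroup G := U.1 ⊓ A with hPdef
  set Q : Subgroup G := U.1 ⊓ B with hQdef
  have hPA : P ≤ A := inf_le_right
  have hQB : Q ≤ B := inf_le_right
  have hPU : P ≤ U.1 := inf_le_left
  have hQU : Q ≤ U.1 := inf_le_left
  have hPp : IsPGroup p P := U.2.to_le hPU
  have hQp : IsPGroup p Q := U.2.to_le hQU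
  have hA₂P : A₂ ≤ P := le_inf hA₂U hA₂A
  have hB₂Q : B₂ ≤ Q := le_inf hB₂U hB₂B
  have hPcard : Nat.card P = p ^ vA :=
    Nat.dvd_antisymm (key A P hPA hPp) (hcardA₂ ▸ Subgroup.card_dvd_of_le hA₂P)
  have hQcard : Nat.card Q = p ^ vB :=
    Nat.dvd_antisymm (key B Q hQB hQp) (hcardB₂ ▸ Subgroup.card_dvd_of_le hB₂Q)
  have hUcard : Nat.card U.1 = p ^ vG := U.card_eq_multiplicity
  have hPQle : (P ⊓ Q : Subgroup G) ≤ A ⊓ B := inf_le_inf hPA hQB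
  have hPQdvd : Nat.card (P ⊓ Q : Subgroup G) ∣ p ^ vAB :=
    key (A ⊓ B) (P ⊓ Q) hPQle (hPp.to_le inf_le_left)
  -- main counting equation
  have heq := card_set_mul_card_inf A B
  rw [hprod] at heq
  have huniv : Nat.card (Set.univ : Set G) = Nat.card G := Nat.card_congr (Equiv.Set.univ G)
  rw [huniv] at heq
  have hG0 : Nat.card G ≠ 0 := Nat.card_pos.ne'
  have hA0 : Nat.card A ≠ 0 := Nat.card_pos.ne'
  have hB0 : Nat.card B ≠ 0 := Nat.card_pos.ne'
  have hAB0 : Nat.card (A ⊓ B : Subgroup G) ≠ 0 := Nat.card_pos.ne'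
  have hv : vG + vAB = vA + vB := by
    have h0 : (Nat.card G * Nat.card (A ⊓ B : Subgroup G)).factorization p
        = (Nat.card A * Nat.card B).factorization p := by rw [heq]
    rw [Nat.factorization_mul hG0 hAB0, Nat.factorization_mul hA0 hB0] at h0
    simpa only [Finsupp.add_apply] using h0
  -- card of P * Q
  have hPQprod := card_set_mul_card_inf P Q
  have hge : p ^ vG ≤ Nat.card ((P : Set G) * (Q : Set G)) := by
    have hle : Nat.card (P ⊓ Q : Subgroup G) ≤ p ^ vAB :=
      Nat.le_of_dvd (pow_pos hp.pos _) hPQdvd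
    have e : Nat.card ((P : Set G) * (Q : Set G)) * Nat.card (P ⊓ Q : Subgroup G)
        = p ^ vG * p ^ vAB := by
      rw [hPQprod, hPcard, hQcard, ← pow_add, ← pow_add, hv]
    have h2 : p ^ vG * Nat.card (P ⊓ Q : Subgroup G)
        ≤ Nat.card ((P : Set G) * (Q : Set G)) * Nat.card (P ⊓ Q : Subgroup G) := by
      rw [e]; exact Nat.mul_le_mul_left _ hle
    exact Nat.le_of_mul_le_mul_right h2 Nat.card_pos
  have hsub : (P : Set G) * (Q : Set G) ⊆ (U.1 : Set G) := by
    rw [Set.mul_subset_iff]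
    intro x hx y hy
    exact U.1.mul_mem (hPU hx) (hQU hy)
  have hset : (U.1 : Set G) = (P : Set G) * (Q : Set G) := by
    refine (Set.eq_of_subset_of_ncard_le hsub ?_ (Set.toFinite _)).symm
    rw [← Nat.card_coe_set_eq, ← Nat.card_coe_set_eq]
    have h5 : Nat.card ((U.1 : Set G)) = Nat.card U.1 := rfl
    rw [h5, hUcard]
    exact hge
  -- relindex facts
  have notdvd : ∀ (C D : Subgroup G) (v : ℕ), D ≤ C → Nat.card D = p ^ v →
      v = (Nat.card C).factorization p → ¬ p ∣ D.relIndex C := by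
    intro C D v hle hcard hval hdvd
    have h1 : D.relIndex C * Nat.card (D.subgroupOf C) = Nat.card C :=
      Subgroup.index_mul_card _
    have h2 : Nat.card (D.subgroupOf C) = Nat.card D :=
      Nat.card_congr (Subgroup.subgroupOfEquivOfLe hle).toEquiv
    obtain ⟨k, hk⟩ := hdvd
    have h3 : p ^ (v + 1) ∣ Nat.card C := by
      refine ⟨k, ?_⟩
      rw [← h1, h2, hcard, hk, pow_succ]
      ring
    have h4 := (Nat.Prime.pow_dvd_iff_le_factorization hp Nat.card_pos.ne').mp h3
    omega
  refine ⟨P, Q, hPA, hQB, hPp, notdvd A P vA hPA hPcard rfl, hQp,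
    notdvd B Q vB hQB hQcard rfl, U.1, hset, U.2, ?_⟩
  intro hdvd
  have h1 : U.1.index * Nat.card U.1 = Nat.card G := Subgroup.index_mul_card _
  obtain ⟨k, hk⟩ := hdvd
  have h3 : p ^ (vG + 1) ∣ Nat.card G := by
    refine ⟨k, ?_⟩
    rw [← h1, hUcard, hk, pow_succ]
    ring
  have h4 := (Nat.Prime.pow_dvd_iff_le_factorization hp hG0).mp h3
  omega
end

section
/- For n ≥ 2 and a prime p, the affine group AGL(n, p) contains an element of order p^n if and only if n = 2 and p = 2. -/
open Module

private lemma two_pow_help : ∀ m : ℕ, m + 4 ≤ 2 ^ (m + 2) := by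
  intro m
  induction m with
  | zero => norm_num
  | succ k ih => rw [pow_succ]; omega

/-- `AGL n p`: the affine group of the vector space `(ZMod p)^n`,
realized as the group of affine self-equivalences. -/
abbrev AGL (n p : ℕ) [Fact (Nat.Prime p)] :=
  (Fin n → ZMod p) ≃ᵃ[ZMod p] (Fin n → ZMod p)

lemma agl_apply {n p : ℕ} [Fact (Nat.Prime p)] (g : AGL n p) (x : Fin n → ZMod p) :
    g x = g.linear x + g 0 := by
  have := g.map_vadd 0 x
  simpa [vadd_eq_add] using this

/-- The embedding of the affine group into the endomorphisms of a space of one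
more dimension, `g ↦ ((x, t) ↦ (g.linear x + t • g 0, t))`. -/
def aglHom (n p : ℕ) [Fact (Nat.Prime p)] :
    AGL n p →* Module.End (ZMod p) ((Fin n → ZMod p) × ZMod p) where
  toFun g :=
    { toFun := fun v => (g.linear v.1 + v.2 • (g 0), v.2)
      map_add' := by
        intro a b
        ext <;> simp [add_smul] <;> abel
      map_smul' := by
        intro c a
        ext <;> simp [smul_smul, smul_add] }
  map_one' := by
    ext v <;> simp [AffineEquiv.one_def]
  map_mul' := by
    intro g h
    ext v <;>
      simp [AffineEquiv.mul_def, AffineEquiv.trans_apply, mul_smul, Module.End.mul_apply,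
        agl_apply g (h 0), map_add, map_smul, smul_add] <;> abel

lemma aglHom_eq_one {n p : ℕ} [Fact (Nat.Prime p)] {g : AGL n p}
    (h : aglHom n p g = 1) : g = 1 := by
  have h1 : ∀ v : (Fin n → ZMod p) × ZMod p, (aglHom n p g) v = v := fun v => by rw [h]; rfl
  have hlin : ∀ x : Fin n → ZMod p, g.linear x = x := by
    intro x
    have := h1 (x, 0)
    simpa [aglHom] using congrArg Prod.fst this
  have h0 : g 0 = 0 := by
    have := h1 (0, 1)
    simpa [aglHom] using congrArg Prod.fst this
  refine AffineEquiv.ext fun x => ?_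
  rw [agl_apply, hlin, h0, add_zero]
  rfl

/-- The key step: if `g ^ (p ^ n) = 1` and `p ^ (n - 1) ≥ n + 1`, then already
`g ^ (p ^ (n - 1)) = 1`. -/
lemma key {n p : ℕ} [hp : Fact (Nat.Prime p)] (g : AGL n p)
    (h : g ^ p ^ n = 1) (hk : n + 1 ≤ p ^ (n - 1)) : g ^ p ^ (n - 1) = 1 := by
  set W := ((Fin n → ZMod p) × ZMod p)
  haveI : CharP (Module.End (ZMod p) W) p := charP_of_injective_algebraMap' (ZMod p) p
  set M : Module.End (ZMod p) W := aglHom n p g with hM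
  have hMpow : M ^ p ^ n = 1 := by
    rw [hM, ← map_pow, h, map_one]
  set N : Module.End (ZMod p) W := M - 1 with hN
  have hNpow : N ^ p ^ n = 0 := by
    rw [hN, sub_pow_char_pow_of_commute p n (Commute.one_right M), hMpow, one_pow, sub_self]
  have hfr : finrank (ZMod p) W = n + 1 := by
    simp [W, Module.finrank_prod]
  have hNnil : N ^ (n + 1) = 0 := by
    have : IsNilpotent N := ⟨_, hNpow⟩
    have h2 := this.charpoly_eq_X_pow_finrank
    have h3 := N.aeval_self_charpoly
    rw [h2, map_pow, Polynomial.aeval_X, hfr] at h3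
    exact h3
  have hMk : M ^ p ^ (n - 1) = 1 := by
    have hM1 : M = N + 1 := by rw [hN, sub_add_cancel]
    rw [hM1, (Commute.one_right N).add_pow]
    rw [Finset.sum_eq_single 0]
    · simp
    · intro i hi hi0
      rcases le_or_gt (n + 1) i with hle | hlt
      · rw [pow_eq_zero_of_le hle hNnil, zero_mul, zero_mul]
      · have hcd : (p : ℕ) ∣ (p ^ (n - 1)).choose i := by
          refine Nat.Prime.dvd_choose_pow hp.out hi0 ?_
          omega
        have : ((p ^ (n - 1)).choose i : Module.End (ZMod p) W) = 0 :=
          (CharP.cast_eq_zero_iff _ p _).mpr hcd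
        rw [this, mul_zero]
    · intro hmem
      simp at hmem
  have : aglHom n p (g ^ p ^ (n - 1)) = 1 := by rw [map_pow, ← hM, hMk]
  exact aglHom_eq_one this

/-! ### The explicit element of order 4 in AGL(2,2) -/

def Lmap : (Fin 2 → ZMod 2) →ₗ[ZMod 2] (Fin 2 → ZMod 2) where
  toFun x := ![x 0 + x 1, x 1]
  map_add' a b := by
    funext i
    fin_cases i <;> simp <;> ring
  map_smul' c a := by
    funext i
    fin_cases i <;> simp [smul_eq_mul, mul_add]

lemma Lmap_invol : Lmap.comp Lmap = LinearMap.id := by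
  refine LinearMap.ext fun x => ?_
  funext i
  fin_cases i <;>
    simp [Lmap] <;>
    first
    | rfl
    | (generalize x 0 = a; generalize x 1 = b; revert a b; decide)

def Lequiv : (Fin 2 → ZMod 2) ≃ₗ[ZMod 2] (Fin 2 → ZMod 2) :=
  LinearEquiv.ofLinear Lmap Lmap Lmap_invol Lmap_invol

def gexp : (Fin 2 → ZMod 2) ≃ᵃ[ZMod 2] (Fin 2 → ZMod 2) :=
  Lequiv.toAffineEquiv.trans (AffineEquiv.constVAdd (ZMod 2) (Fin 2 → ZMod 2) ![0, 1])

lemma gexp_apply (x : Fin 2 → ZMod 2) : gexp x = ![0, 1] + ![x 0 + x 1, x 1] := by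
  simp [gexp, Lequiv, Lmap, AffineEquiv.trans_apply, vadd_eq_add]

lemma gexp_sq (x : Fin 2 → ZMod 2) : (gexp ^ 2) x = ![1, 0] + x := by
  rw [pow_two, AffineEquiv.mul_def, AffineEquiv.trans_apply, gexp_apply, gexp_apply]
  funext i
  fin_cases i <;>
    · simp
      generalize x 0 = a; generalize x 1 = b
      revert a b; decide

lemma gexp_pow_four : gexp ^ 4 = 1 := by
  refine AffineEquiv.ext fun x => ?_
  have : gexp ^ 4 = (gexp ^ 2) ^ 2 := by rw [← pow_mul]
  rw [this, pow_two, AffineEquiv.mul_def, AffineEquiv.trans_apply, gexp_sq, gexp_sq]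
  have h1 : (1 : (Fin 2 → ZMod 2) ≃ᵃ[ZMod 2] (Fin 2 → ZMod 2)) x = x := rfl
  rw [h1]
  funext i
  fin_cases i <;>
    simp [Matrix.vecHead, Matrix.vecTail, ← add_assoc, show (1 : ZMod 2) + 1 = 0 by decide]

lemma gexp_sq_ne_one : gexp ^ 2 ≠ 1 := by
  intro h
  have h0 := congrFun (DFunLike.congr_fun h 0) 0
  rw [gexp_sq] at h0
  simp [AffineEquiv.coe_one] at h0

theorem stmt5 (n p : ℕ) [Fact (Nat.Prime p)] (hn : 2 ≤ n) :
    (∃ g : AGL n p, orderOf g = p ^ n) ↔ n = 2 ∧ p = 2 := by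
  constructor
  · rintro ⟨g, hg⟩
    by_contra hcon
    have hp2 : 2 ≤ p := (Fact.out (p := Nat.Prime p)).two_le
    have hk : n + 1 ≤ p ^ (n - 1) := by
      rcases eq_or_lt_of_le hn with h2 | h3
      · have hp3 : 3 ≤ p := by
          rcases Nat.lt_or_ge p 3 with h | h
          · exfalso; exact hcon ⟨h2.symm, by omega⟩
          · exact h
        rw [← h2]
        simpa using hp3
      · calc n + 1 ≤ 2 ^ (n - 1) := by
              have := two_pow_help (n - 3)
              have heq : n - 1 = n - 3 + 2 := by omega
              rw [heq]; omega
          _ ≤ p ^ (n - 1) := Nat.pow_le_pow_left hp2 _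
    have h1 : g ^ p ^ n = 1 := by rw [← hg]; exact pow_orderOf_eq_one g
    have h2 := key g h1 hk
    have hdvd : p ^ n ∣ p ^ (n - 1) := by
      rw [← hg]; exact orderOf_dvd_of_pow_eq_one h2
    have hle := Nat.le_of_dvd (Nat.pow_pos (by omega)) hdvd
    have hlt : p ^ (n - 1) < p ^ n := Nat.pow_lt_pow_right (by omega) (by omega)
    omega
  · rintro ⟨rfl, rfl⟩
    refine ⟨gexp, ?_⟩
    have hnot : ¬gexp ^ 2 ^ 1 = 1 := by rw [pow_one]; exact gexp_sq_ne_one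
    have hfin : gexp ^ 2 ^ (1 + 1) = 1 := by
      rw [show (2 : ℕ) ^ (1 + 1) = 4 from rfl]; exact gexp_pow_four
    have := orderOf_eq_prime_pow hnot hfin
    simpa using this
end

section
/- Let G be a finite group with an abelian normal subgroup N, and let M be a subgroup with N ≤ M ≤ G such that the order of N is coprime to the index [G : M]. If N has a complement in M, then N has a complement in G. -/
open Pointwise
open scoped IsMulCommutative

section Gaschuetz

variable {G : Type*} [Group G] (N M : Subgroup G)

/-- A section of the quotient map `G → G ⧸ M`. -/
noncomputable def gsect (q : G ⧸ M) : G := Quotient.out q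

lemma gsect_spec (q : G ⧸ M) : QuotientGroup.mk (gsect M q) = q :=
  QuotientGroup.out_eq' q

/-- The "cocycle" `M`-valued function attached to the section. -/
noncomputable def gm (g : G) (q : G ⧸ M) : G :=
  (gsect M (g • q))⁻¹ * (g * gsect M q)

lemma mk_smul_gsect (g : G) (q : G ⧸ M) :
    QuotientGroup.mk (g * gsect M q) = g • q := by
  conv_rhs => rw [← gsect_spec M q]
  rw [MulAction.Quotient.smul_mk, smul_eq_mul]

lemma gm_mem (g : G) (q : G ⧸ M) : gm M g q ∈ M :=
  QuotientGroup.eq.mp (by rw [gsect_spec, mk_smul_gsect])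

lemma gm_mul (g g' : G) (q : G ⧸ M) :
    gm M (g * g') q = gm M g (g' • q) * gm M g' q := by
  simp only [gm, mul_smul]
  group

variable [N.Normal] [IsMulCommutative N] [Fintype (G ⧸ M)] (A : G → N)

/-- Conjugated `N`-component of the cocycle. -/
noncomputable def gc (g : G) (q : G ⧸ M) : N :=
  MulAut.conjNormal (gsect M q) (A (gm M g q))

/-- Average (product) of the conjugated components over all cosets. -/
noncomputable def ge (g : G) : N := ∏ q : G ⧸ M, gc N M A g q

lemma gc_mul
    (hAmul : ∀ m m', m ∈ M → m' ∈ M →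
      ((A (m * m') : G) = m'⁻¹ * A m * m' * A m'))
    (g g' : G) (q : G ⧸ M) :
    gc N M A (g * g') q =
      MulAut.conjNormal g'⁻¹ (gc N M A g (g' • q)) * gc N M A g' q := by
  apply Subtype.ext
  simp only [gc, MulAut.conjNormal_apply, MulMemClass.coe_mul, gm_mul]
  rw [hAmul _ _ (gm_mem M g (g' • q)) (gm_mem M g' q)]
  simp only [gm]
  group

lemma ge_mul
    (hAmul : ∀ m m', m ∈ M → m' ∈ M →
      ((A (m * m') : G) = m'⁻¹ * A m * m' * A m'))
    (g g' : G) :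
    ge N M A (g * g') = MulAut.conjNormal g'⁻¹ (ge N M A g) * ge N M A g' := by
  rw [ge, ge, ge, Finset.prod_congr rfl (fun q _ => gc_mul N M A hAmul g g' q),
    Finset.prod_mul_distrib, ← map_prod]
  congr 1
  apply congrArg
  exact Fintype.prod_bijective (fun q => g' • q) (MulAction.bijective g')
    (fun x => gc N M A g (g' • x)) (gc N M A g) (fun q => rfl)

lemma ge_N (hNM : N ≤ M) (hAN : ∀ x, (hx : x ∈ N) → (A x : G) = x)
    (x : G) (hx : x ∈ N) :
    ge N M A x = (⟨x, hx⟩ : N) ^ M.index := by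
  have key : ∀ q : G ⧸ M, gc N M A x q = (⟨x, hx⟩ : N) := by
    intro q
    have hq : x • q = q := by
      rw [← mk_smul_gsect M x q]
      conv_rhs => rw [← gsect_spec M q]
      exact QuotientGroup.eq.mpr (by
        have : (gsect M q)⁻¹ * x⁻¹ * gsect M q ∈ N :=
          Subgroup.Normal.conj_mem' ‹N.Normal› _ (inv_mem hx) _
        simpa [mul_assoc] using hNM this)
    have hmemN : gm M x q ∈ N := by
      rw [gm, hq]
      have : (gsect M q)⁻¹ * x * gsect M q ∈ N :=
        Subgroup.Normal.conj_mem' ‹N.Normal› _ hx _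
      simpa [mul_assoc] using this
    apply Subtype.ext
    simp only [gc, MulAut.conjNormal_apply]
    rw [hAN _ hmemN]
    simp only [gm, hq]
    group
  rw [ge, Finset.prod_congr rfl (fun q _ => key q), Finset.prod_const, Finset.card_univ,
    Subgroup.index_eq_card, Nat.card_eq_fintype_card]

end Gaschuetz

theorem stmt6 {G : Type*} [Group G] [Finite G] (N M : Subgroup G)
    (hNM : N ≤ M) (hN : N.Normal) (hab : ∀ x ∈ N, ∀ y ∈ N, x * y = y * x)
    (hcop : Nat.Coprime (Nat.card N) M.index)
    (hcompl : ∃ H : Subgroup G, H ≤ M ∧ N ⊓ H = ⊥ ∧ (N : Set G) * (H : Set G) = (M : Set G)) :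
    ∃ H : Subgroup G, N ⊓ H = ⊥ ∧ (N : Set G) * (H : Set G) = Set.univ := by
  classical
  obtain ⟨H, hHM, hdisj, hprodM⟩ := hcompl
  haveI := hN
  haveI : IsMulCommutative N := ⟨⟨fun a b => Subtype.ext (hab a a.2 b b.2)⟩⟩
  letI : Fintype (G ⧸ M) := Fintype.ofFinite _
  -- uniqueness of the `N`-component in a decomposition `h * a`
  have huniq : ∀ (h₁ h₂ a₁ a₂ : G), h₁ ∈ H → h₂ ∈ H → a₁ ∈ N → a₂ ∈ N →
      h₁ * a₁ = h₂ * a₂ → a₁ = a₂ := by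
    intro h₁ h₂ a₁ a₂ hh₁ hh₂ ha₁ ha₂ heq
    have h3 : a₂ * a₁⁻¹ = h₂⁻¹ * h₁ := by
      calc a₂ * a₁⁻¹ = h₂⁻¹ * (h₂ * a₂) * a₁⁻¹ := by group
        _ = h₂⁻¹ * (h₁ * a₁) * a₁⁻¹ := by rw [heq]
        _ = h₂⁻¹ * h₁ := by group
    have hmem : a₂ * a₁⁻¹ ∈ N ⊓ H := Subgroup.mem_inf.mpr
      ⟨mul_mem ha₂ (inv_mem ha₁), h3 ▸ mul_mem (inv_mem hh₂) hh₁⟩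
    rw [hdisj, Subgroup.mem_bot] at hmem
    exact (mul_inv_eq_one.mp hmem).symm
  -- existence of a decomposition `m = h * a` with `h ∈ H`, `a ∈ N`
  have hdec : ∀ g : G, ∃ a : N, g ∈ M → ∃ h ∈ H, g = h * (a : G) := by
    intro g
    by_cases hg : g ∈ M
    · have : g ∈ (N : Set G) * (H : Set G) := by rw [hprodM]; exact hg
      obtain ⟨a, ha, h, hh, hgeq⟩ := this
      refine ⟨⟨h⁻¹ * a * h, hN.conj_mem' a ha h⟩, fun _ => ⟨h, hh, ?_⟩⟩
      rw [← hgeq]; group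
    · exact ⟨1, fun h => absurd h hg⟩
  choose A hA using hdec
  have hAmul : ∀ m m', m ∈ M → m' ∈ M →
      ((A (m * m') : G) = m'⁻¹ * A m * m' * A m') := by
    intro m m' hm hm'
    obtain ⟨h, hh, hdm⟩ := hA m hm
    obtain ⟨h', hh', hdm'⟩ := hA m' hm'
    obtain ⟨h'', hh'', hdm''⟩ := hA (m * m') (mul_mem hm hm')
    have haN : (A m : G) ∈ N := (A m).2
    have haN' : (A m' : G) ∈ N := (A m').2
    have haN'' : (A (m * m') : G) ∈ N := (A (m * m')).2
    set a : G := (A m : G) with ha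
    set a' : G := (A m' : G) with ha'
    set a'' : G := (A (m * m') : G) with ha''
    clear_value a a' a''
    have hxN : h'⁻¹ * a * h' ∈ N := hN.conj_mem' _ haN _
    have hc : a' * (h'⁻¹ * a * h') = (h'⁻¹ * a * h') * a' := hab _ haN' _ hxN
    have key : m * m' = (h * h') * ((h'⁻¹ * a * h') * a') := by
      rw [hdm, hdm']
      group
    have e1 : a'' = (h'⁻¹ * a * h') * a' :=
      huniq h'' (h * h') a'' _ hh'' (mul_mem hh hh') haN'' (mul_mem hxN haN')
        (by rw [← hdm'']; exact key)
    rw [e1, hdm']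
    calc h'⁻¹ * a * h' * a' = a'⁻¹ * (a' * (h'⁻¹ * a * h')) * a' := by group
      _ = a'⁻¹ * (h'⁻¹ * a * h' * a') * a' := by rw [hc]
      _ = (h' * a')⁻¹ * a * (h' * a') * a' := by group
  have hAN : ∀ x, (hx : x ∈ N) → (A x : G) = x := by
    intro x hx
    obtain ⟨h, hh, hdx⟩ := hA x (hNM hx)
    exact huniq h 1 (A x) x hh (one_mem H) (A x).2 hx (by rw [← hdx, one_mul])
  -- the averaged cocycle
  have hone : ge N M A 1 = 1 := by
    have := ge_mul N M A hAmul 1 1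
    rw [mul_one, inv_one, map_one] at this
    exact right_eq_mul.mp (this.trans (by rw [MulAut.one_apply]))
  let K : Subgroup G :=
    { carrier := {g | ge N M A g = 1}
      one_mem' := hone
      mul_mem' := by
        intro a b ha hb
        simp only [Set.mem_setOf_eq] at ha hb ⊢
        rw [ge_mul N M A hAmul a b, ha, hb, map_one, mul_one]
      inv_mem' := by
        intro a ha
        simp only [Set.mem_setOf_eq] at ha ⊢
        have h2 := ge_mul N M A hAmul a a⁻¹
        rw [mul_inv_cancel, hone, ha, inv_inv, map_one, one_mul] at h2
        exact h2.symm }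
  have hKmem : ∀ g : G, g ∈ K ↔ ge N M A g = 1 := fun g => Iff.rfl
  refine ⟨K, ?_, ?_⟩
  · rw [eq_bot_iff]
    intro x hxmem
    obtain ⟨hxN, hxK⟩ := Subgroup.mem_inf.mp hxmem
    rw [hKmem, ge_N N M A hNM hAN x hxN] at hxK
    have h1 : (⟨x, hxN⟩ : N) = 1 := by
      apply (powCoprime hcop).injective
      rw [powCoprime_apply, powCoprime_apply, hxK, one_pow]
    rw [Subgroup.mem_bot]
    exact congrArg Subtype.val h1
  · ext g
    simp only [Set.mem_univ, iff_true]
    obtain ⟨c, hc⟩ : ∃ c : N, c ^ M.index = (ge N M A g)⁻¹ :=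
      ⟨(powCoprime hcop).symm (ge N M A g)⁻¹, by
        have := (powCoprime hcop).apply_symm_apply (ge N M A g)⁻¹
        rwa [powCoprime_apply] at this⟩
    set b : N := MulAut.conjNormal g c with hbdef
    have hback : MulAut.conjNormal g⁻¹ b = c := by
      apply Subtype.ext
      rw [hbdef]
      simp only [MulAut.conjNormal_apply]
      group
    have hbg : ge N M A ((b : G) * g) = 1 := by
      rw [ge_mul N M A hAmul, ge_N N M A hNM hAN _ b.2]
      have hsub : (⟨(b : G), b.2⟩ : N) = b := rfl
      rw [hsub, map_pow, hback, hc, inv_mul_cancel]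
    exact Set.mem_mul.mpr ⟨(b : G)⁻¹, inv_mem b.2, (b : G) * g, (hKmem _).mpr hbg, by group⟩
end

section
/- Let p be an odd prime and G a finite p-group containing a cyclic maximal subgroup. Then G is isomorphic to one of: the cyclic group Z_{p^n}, the direct product Z_{p^{n-1}} × Z_p with n ≥ 2, or the modular group ⟨a, b | a^{p^{n-1}} = b^p = 1, a^b = a^{1+p^{n-2}}⟩ with n ≥ 3. -/
open Subgroup Finset
section AUX

lemma isCyclic_zpowers {G : Type*} [Group G] (x : G) : IsCyclic (Subgroup.zpowers x) := by
  refine ⟨⟨x, Subgroup.mem_zpowers x⟩, ?_⟩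
  rintro ⟨y, hy⟩
  obtain ⟨m, rfl⟩ := Subgroup.mem_zpowers_iff.mp hy
  exact ⟨m, Subtype.ext (by push_cast; rfl)⟩

lemma aux_pow (M : ℕ) (q c : ZMod M) (hq : q * q = 0) (i : ℕ) :
    (1 + c * q) ^ i = 1 + (i : ZMod M) * c * q := by
  induction i with
  | zero => simp
  | succ i ih =>
    have key : (1 + (i : ZMod M) * c * q) * (1 + c * q)
        = 1 + ((i : ZMod M) + 1) * c * q + (i : ZMod M) * (c * c) * (q * q) := by ring
    rw [pow_succ, ih, key, hq]
    push_cast; ring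

lemma aux_sum (M p : ℕ) (q c : ZMod M) (hq : q * q = 0) (hpq : (p : ZMod M) * q = 0)
    (h2 : IsUnit (2 : ZMod M)) :
    ∑ i ∈ Finset.range p, (1 + c * q) ^ i = (p : ZMod M) := by
  have h1 : ∑ i ∈ Finset.range p, (1 + c * q) ^ i
      = (p : ZMod M) + (((∑ i ∈ Finset.range p, i : ℕ) : ZMod M)) * c * q := by
    rw [Finset.sum_congr rfl (fun i _ => aux_pow M q c hq i), Finset.sum_add_distrib]
    push_cast
    simp [Finset.sum_mul]
  have h3 : ((∑ i ∈ Finset.range p, i : ℕ) : ZMod M) * 2 = (p : ZMod M) * ((p : ZMod M) - 1) := by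
    have := Finset.sum_range_id_mul_two p
    calc ((∑ i ∈ Finset.range p, i : ℕ) : ZMod M) * 2 = (((∑ i ∈ Finset.range p, i) * 2 : ℕ) : ZMod M) := by push_cast; ring
    _ = ((p * (p-1) : ℕ) : ZMod M) := by rw [this]
    _ = (p : ZMod M) * ((p : ZMod M) - 1) := by
        rcases Nat.eq_zero_or_pos p with h | h
        · subst h; simp
        · push_cast [Nat.cast_sub h]; ring
  apply h2.mul_left_cancel
  rw [h1]
  have : (2 : ZMod M) * ((p : ZMod M) + (((∑ i ∈ Finset.range p, i : ℕ) : ZMod M)) * c * q)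
      = 2 * (p : ZMod M) + ((((∑ i ∈ Finset.range p, i : ℕ) : ZMod M)) * 2) * c * q := by ring
  rw [this, h3]
  have : (p : ZMod M) * ((p : ZMod M) - 1) * c * q = ((p:ZMod M) - 1) * c * ((p : ZMod M) * q) := by ring
  rw [this, hpq]
  ring

section Group
variable {G : Type*} [Group G]

lemma conj_pow_lemma (a g : G) (r : ℕ) (h : g⁻¹ * a * g = a ^ r) (i : ℕ) :
    (g ^ i)⁻¹ * a * g ^ i = a ^ (r ^ i) := by
  induction i with
  | zero => simp
  | succ i ih =>
    have h1 : (g ^ (i+1))⁻¹ * a * g ^ (i+1) = g⁻¹ * ((g ^ i)⁻¹ * a * g ^ i) * g := by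
      rw [pow_succ]; group
    have h2 : (g⁻¹ * a * g⁻¹⁻¹) ^ r ^ i = g⁻¹ * a ^ r ^ i * g⁻¹⁻¹ := conj_pow
    rw [inv_inv] at h2
    rw [h1, ih, ← h2, h, ← pow_mul, show r * r ^ i = r ^ (i+1) by ring]

lemma push_lemma (a g : G) (u : ℕ) (h : g * a * g⁻¹ = a ^ u) (i x : ℕ) :
    g ^ i * a ^ x = a ^ (x * u ^ i) * g ^ i := by
  induction i with
  | zero => simp
  | succ i ih =>
    have h1 : g * a ^ (x * u ^ i) * g⁻¹ = a ^ (x * u ^ i * u) := by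
      rw [← conj_pow, h, ← pow_mul, mul_comm u]
    calc g ^ (i+1) * a ^ x = g * (g ^ i * a ^ x) := by rw [pow_succ']; group
    _ = g * (a ^ (x * u ^ i) * g ^ i) := by rw [ih]
    _ = (g * a ^ (x * u ^ i) * g⁻¹) * (g * g ^ i) := by group
    _ = a ^ (x * u ^ i * u) * (g * g ^ i) := by rw [h1]
    _ = a ^ (x * u ^ (i+1)) * g ^ (i+1) := by
        rw [show x * u ^ i * u = x * u ^ (i+1) by ring, ← pow_succ']

lemma prod_pow_lemma (a g : G) (u t : ℕ) (h : g * a * g⁻¹ = a ^ u) (i : ℕ) :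
    (a ^ t * g) ^ i = a ^ (t * ∑ j ∈ Finset.range i, u ^ j) * g ^ i := by
  induction i with
  | zero => simp
  | succ i ih =>
    calc (a ^ t * g) ^ (i+1) = (a ^ t * g) ^ i * (a ^ t * g) := pow_succ _ _
    _ = a ^ (t * ∑ j ∈ Finset.range i, u ^ j) * (g ^ i * a ^ t) * g := by rw [ih]; group
    _ = a ^ (t * ∑ j ∈ Finset.range i, u ^ j) * (a ^ (t * u ^ i) * g ^ i) * g := by
        rw [push_lemma a g u h i t]
    _ = a ^ (t * ∑ j ∈ Finset.range i, u ^ j + t * u ^ i) * g ^ (i+1) := by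
        rw [pow_add, pow_succ]; group
    _ = a ^ (t * ∑ j ∈ Finset.range (i+1), u ^ j) * g ^ (i+1) := by
        rw [Finset.sum_range_succ, Nat.mul_add]

end Group

def multiplicativeProdEquiv (A B : Type*) [AddMonoid A] [AddMonoid B] :
    Multiplicative (A × B) ≃* Multiplicative A × Multiplicative B where
  toFun x := (Multiplicative.ofAdd x.toAdd.1, Multiplicative.ofAdd x.toAdd.2)
  invFun x := Multiplicative.ofAdd (x.1.toAdd, x.2.toAdd)
  left_inv _ := rfl
  right_inv _ := rfl
  map_mul' _ _ := rfl

lemma aux_top {G : Type*} [Group G] [Finite G] {p n : ℕ} (hp : p.Prime)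
    (hcard : Nat.card G = p ^ n) {H K : Subgroup G} (hHK : H ≤ K) (hne : H ≠ K)
    (hcardH : Nat.card H = p ^ (n - 1)) : K = ⊤ := by
  have h1 : Nat.card H ∣ Nat.card K := Subgroup.card_dvd_of_le hHK
  have h2 : Nat.card K ∣ p ^ n := hcard ▸ Subgroup.card_subgroup_dvd_card K
  obtain ⟨m, hm, hKm⟩ := (Nat.dvd_prime_pow hp).mp h2
  have hmge : n - 1 ≤ m := by
    rw [hcardH, hKm] at h1
    exact (Nat.pow_dvd_pow_iff_le_right hp.one_lt).mp h1
  have hmn : m = n := by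
    by_contra hc
    have : m = n - 1 := by omega
    exact hne (Subgroup.eq_of_le_of_card_ge hHK (by rw [hKm, this, hcardH]))
  exact Subgroup.eq_top_of_card_eq K (by rw [hKm, hmn, hcard])

lemma key_dvd {G : Type*} [Group G] [Finite G] {p n : ℕ} (hp : p.Prime) (hn : 2 ≤ n)
    (hcard : Nat.card G = p ^ n) (hG : ¬ IsCyclic G) {a b : G} (horder : orderOf a = p ^ (n-1))
    {k : ℕ} (hk : a ^ k = b ^ p) : p ∣ k := by
  have h1 : orderOf b ∣ p ^ n := hcard ▸ orderOf_dvd_natCard b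
  obtain ⟨m, hm, hbm⟩ := (Nat.dvd_prime_pow hp).mp h1
  have hmn : m ≤ n - 1 := by
    by_contra h
    have hmn' : m = n := by omega
    exact hG (isCyclic_of_orderOf_eq_card b (by rw [hbm, hmn', hcard]))
  have hb1 : b ^ p ^ (n-1) = 1 := by
    apply orderOf_dvd_iff_pow_eq_one.mp
    rw [hbm]
    exact pow_dvd_pow p hmn
  have h2 : a ^ (k * p ^ (n-2)) = 1 := by
    have e1 : p * p ^ (n-2) = p ^ (n-1) := by
      rw [← pow_succ']; congr 1; omega
    rw [pow_mul, hk, ← pow_mul, e1, hb1]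
  have h3 : p ^ (n-1) ∣ k * p ^ (n-2) := horder ▸ orderOf_dvd_of_pow_eq_one h2
  have e2 : p ^ (n-1) = p ^ (n-2) * p := by rw [← pow_succ]; congr 1; omega
  rw [e2, mul_comm k] at h3
  exact (mul_dvd_mul_iff_left (a := p ^ (n-2)) (pow_ne_zero _ hp.pos.ne')).mp h3
end AUX

lemma exists_inv_nat {p : ℕ} (hp : p.Prime) {m : ℕ} (hpm : ¬ p ∣ m) :
    ∃ c d : ℕ, m * c = 1 + p * d ∧ ¬ p ∣ c := by
  haveI : Fact p.Prime := ⟨hp⟩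
  have h0 : (m : ZMod p) ≠ 0 := by
    rwa [Ne, ZMod.natCast_eq_zero_iff]
  set c := ((m : ZMod p)⁻¹).val with hc
  have h1 : ((m * c : ℕ) : ZMod p) = ((1 : ℕ) : ZMod p) := by
    push_cast [hc]
    rw [ZMod.natCast_val, ZMod.cast_id, mul_inv_cancel₀ h0]
  have h2 : m * c ≡ 1 [MOD p] := (ZMod.natCast_eq_natCast_iff _ _ _).mp h1
  have hc0 : c ≠ 0 := by
    intro hcz
    apply inv_ne_zero h0
    rw [← ZMod.val_eq_zero, ← hc, hcz]
  have hmc : 1 ≤ m * c := by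
    have hm0 : m ≠ 0 := by rintro rfl; exact hpm (dvd_zero p)
    exact Nat.one_le_iff_ne_zero.mpr (Nat.mul_ne_zero hm0 hc0)
  have h4 : p ∣ m * c - 1 := (Nat.modEq_iff_dvd' hmc).mp h2.symm
  obtain ⟨d, hd⟩ := h4
  refine ⟨c, d, by omega, ?_⟩
  intro hpc
  have h5 : p ∣ m * c := Dvd.dvd.mul_left hpc m
  rw [show m * c = 1 + p * d by omega] at h5
  rw [Nat.add_comm] at h5
  have h6 : p ∣ 1 := (Nat.dvd_add_right ⟨d, rfl⟩).mp h5
  exact Nat.Prime.one_lt hp |>.ne' (Nat.dvd_one.mp h6)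



theorem stmt8 {G : Type*} [Group G] [Finite G] (p n : ℕ) (hp : p.Prime) (hodd : Odd p)
    (hcard : Nat.card G = p ^ n)
    (hmax : ∃ H : Subgroup G, IsCyclic H ∧ H.index = p) :
    IsCyclic G ∨
    (2 ≤ n ∧ Nonempty (G ≃* Multiplicative (ZMod (p ^ (n - 1)) × ZMod p))) ∨
    (3 ≤ n ∧ ∃ a b : G, orderOf a = p ^ (n - 1) ∧ orderOf b = p ∧
      b⁻¹ * a * b = a ^ (1 + p ^ (n - 2)) ∧ Subgroup.closure {a, b} = ⊤) := by
  classical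
  obtain ⟨H, hHcyc, hHidx⟩ := hmax
  by_cases hG : IsCyclic G
  · exact Or.inl hG
  haveI : Fact p.Prime := ⟨hp⟩
  have hp1 : 1 < p := hp.one_lt
  -- n ≥ 2
  have hn2 : 2 ≤ n := by
    by_contra hc
    interval_cases n
    · rw [pow_zero] at hcard
      obtain ⟨h1, h2⟩ := Nat.card_eq_one_iff_unique.mp hcard
      exact hG (isCyclic_of_subsingleton)
    · rw [pow_one] at hcard
      exact hG (isCyclic_of_prime_card hcard)
  -- card H
  have hcardH : Nat.card H = p ^ (n - 1) := by
    have h1 : Nat.card H * H.index = Nat.card G := H.card_mul_index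
    rw [hHidx, hcard] at h1
    have h2 : p ^ n = p ^ (n-1) * p := by rw [← pow_succ]; congr 1; omega
    rw [h2] at h1
    exact Nat.eq_of_mul_eq_mul_right hp.pos h1
  -- H is normal
  have hHne : H ≠ ⊤ := by
    intro hc
    rw [hc, Subgroup.index_top] at hHidx
    omega
  have hpG : IsPGroup p G := IsPGroup.of_card hcard
  haveI hHnormal : H.Normal := by
    have hnc : NormalizerCondition G :=
      @normalizerCondition_of_isNilpotent _ _ hpG.isNilpotent
    have hlt : H < Subgroup.normalizer (H : Set G) := hnc H (lt_top_iff_ne_top.mpr hHne)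
    exact Subgroup.normalizer_eq_top_iff.mp (aux_top hp hcard hlt.le hlt.ne hcardH)
  -- generator of H
  obtain ⟨g, hgen⟩ := hHcyc.exists_generator
  set a : G := (g : G) with ha_def
  have hHz : Subgroup.zpowers a = H := by
    apply le_antisymm
    · rw [Subgroup.zpowers_le]; exact g.2
    · intro x hx
      refine Subgroup.mem_zpowers_iff.mpr ⟨?_, ?_⟩
      · exact Classical.choose (Subgroup.mem_zpowers_iff.mp (hgen ⟨x, hx⟩))
      · have hm := Classical.choose_spec (Subgroup.mem_zpowers_iff.mp (hgen ⟨x, hx⟩))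
        have := congrArg (fun y : H => (y : G)) hm
        simpa using this
  have ha_mem : a ∈ H := hHz ▸ Subgroup.mem_zpowers a
  have horder : orderOf a = p ^ (n - 1) := by
    rw [← Nat.card_zpowers, hHz, hcardH]
  have ha1 : a ≠ 1 := by
    intro hc
    rw [hc, orderOf_one] at horder
    have := Nat.one_lt_pow (n := n - 1) (by omega) hp1
    omega
  -- powers of a
  have hpow : ∀ x ∈ H, ∃ m : ℕ, a ^ m = x := by
    intro x hx
    rw [← hHz, ← mem_powers_iff_mem_zpowers] at hx
    exact (Submonoid.mem_powers_iff x a).mp hx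
  -- element outside H
  obtain ⟨b₀, hb₀⟩ : ∃ b : G, b ∉ H := by
    by_contra hc
    push_neg at hc
    exact hHne ((Subgroup.eq_top_iff' H).mpr hc)
  have hb₀p : b₀ ^ p ∈ H := by
    rw [← QuotientGroup.eq_one_iff]
    have : ((b₀ ^ p : G) : G ⧸ H) = ((b₀ : G ⧸ H)) ^ p := rfl
    rw [this, ← hHidx, Subgroup.index_eq_card]
    exact pow_card_eq_one'
  -- conjugation exponent
  have hconj_mem : b₀⁻¹ * a * b₀ ∈ H := by
    have := hHnormal.conj_mem a ha_mem b₀⁻¹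
    rwa [inv_inv] at this
  obtain ⟨r, hr⟩ := hpow _ hconj_mem
  -- powers of a commute with everything in H
  have hcomm_H : ∀ x ∈ H, Commute a x := by
    intro x hx
    obtain ⟨m, rfl⟩ := hpow x hx
    exact (Commute.refl a).pow_right m
  by_cases hcomm : b₀⁻¹ * a * b₀ = a
  · -- abelian case
    have hab : Commute a b₀ := by
      have h : a * b₀ = b₀ * a := by
        conv_rhs => rw [← hcomm]
        group
      exact h
    obtain ⟨k, hk⟩ := hpow _ hb₀p
    obtain ⟨k', hk'⟩ := key_dvd hp hn2 hcard hG horder hk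
    set t : ℕ := k' * (p ^ (n-1) - 1) with ht
    set b₂ : G := a ^ t * b₀ with hb₂
    have hm1 : 1 ≤ p ^ (n-1) := Nat.one_le_pow _ _ hp.pos
    have h3 : t * p + k = k' * p * p ^ (n-1) := by
      have e : p ^ (n-1) - 1 + 1 = p ^ (n-1) := by omega
      calc t * p + k = k' * (p ^ (n-1) - 1) * p + p * k' := by rw [ht, hk']
      _ = k' * p * ((p ^ (n-1) - 1) + 1) := by ring
      _ = k' * p * p ^ (n-1) := by rw [e]
    have hb₂p : b₂ ^ p = 1 := by
      have h1 : b₂ ^ p = a ^ (t * p) * b₀ ^ p := by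
        rw [hb₂, (hab.pow_left t).mul_pow, ← pow_mul]
      have ha0 : a ^ p ^ (n-1) = 1 := by rw [← horder]; exact pow_orderOf_eq_one a
      rw [h1, ← hk, ← pow_add, h3, show k' * p * p ^ (n-1) = p ^ (n-1) * (k' * p) by ring,
        pow_mul, ha0, one_pow]
    have hatm : a ^ t ∈ H := pow_mem ha_mem t
    have hb₂H : b₂ ∉ H := by
      intro hc
      apply hb₀
      have h5 := H.mul_mem (H.inv_mem hatm) hc
      rwa [hb₂, ← mul_assoc, inv_mul_cancel, one_mul] at h5
    have hb₂1 : b₂ ≠ 1 := by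
      intro hc
      exact hb₂H (hc ▸ H.one_mem)
    have horderb₂ : orderOf b₂ = p := orderOf_eq_prime hb₂p hb₂1
    set K : Subgroup G := Subgroup.zpowers b₂ with hK
    have hcardK : Nat.card K = p := by rw [hK, Nat.card_zpowers, horderb₂]
    have hab₂ : Commute a b₂ := ((Commute.refl a).pow_right t).mul_right hab
    have hKpow : ∀ y ∈ K, ∃ m : ℕ, b₂ ^ m = y := by
      intro y hy
      rw [hK, ← mem_powers_iff_mem_zpowers] at hy
      exact (Submonoid.mem_powers_iff y b₂).mp hy
    have hcommHK : ∀ (x : H) (y : K), Commute (x : G) (y : G) := by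
      rintro ⟨x, hx⟩ ⟨y, hy⟩
      obtain ⟨m, rfl⟩ := hpow x hx
      obtain ⟨mk, rfl⟩ := hKpow y hy
      exact hab₂.pow_pow m mk
    have htriv : ∀ z, z ∈ H → z ∈ K → z = 1 := by
      intro z hzH hzK
      obtain ⟨m, rfl⟩ := hKpow z hzK
      by_cases hpm : p ∣ m
      · obtain ⟨d, rfl⟩ := hpm
        rw [pow_mul, hb₂p, one_pow]
      · exfalso
        apply hb₂H
        obtain ⟨c, d, hcd, -⟩ := exists_inv_nat hp hpm
        have : (b₂ ^ m) ^ c ∈ H := pow_mem hzH c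
        rwa [← pow_mul, hcd, pow_add, pow_one, pow_mul, hb₂p, one_pow, mul_one] at this
    let φ : (H × K) →* G := MonoidHom.mk' (fun x => (x.1 : G) * (x.2 : G)) (by
      rintro ⟨x1, y1⟩ ⟨x2, y2⟩
      simp only [Prod.mk_mul_mk, Subgroup.coe_mul]
      exact ((hcommHK x2 y1).mul_mul_mul_comm _ _))
    have hinj : Function.Injective φ := by
      rw [injective_iff_map_eq_one]
      rintro ⟨x, y⟩ hxy
      have hφ : (x : G) * (y : G) = 1 := hxy
      have hx : (x : G) = (y : G)⁻¹ := by
        rw [eq_inv_iff_mul_eq_one]; exact hφ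
      have hxK : (x : G) ∈ K := hx ▸ K.inv_mem y.2
      have h1 : (x : G) = 1 := htriv _ x.2 hxK
      have h2 : (y : G) = 1 := by
        rw [h1, one_mul] at hφ; exact hφ
      rw [Prod.ext_iff]
      exact ⟨Subtype.ext h1, Subtype.ext h2⟩
    have hsurj : Function.Surjective φ := by
      rw [← MonoidHom.range_eq_top]
      apply Subgroup.eq_top_of_card_eq
      calc Nat.card φ.range = Nat.card (Set.range φ) :=
            Nat.card_congr (Equiv.setCongr (MonoidHom.coe_range φ))
      _ = Nat.card (H × K) := Nat.card_range_of_injective hinj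
      _ = Nat.card H * Nat.card K := Nat.card_prod _ _
      _ = p ^ (n-1) * p := by rw [hcardH, hcardK]
      _ = p ^ n := by rw [← pow_succ]; congr 1; omega
      _ = Nat.card G := hcard.symm
    have e1 : (H × K) ≃* G := MulEquiv.ofBijective φ ⟨hinj, hsurj⟩
    have e2 : Multiplicative (ZMod (p ^ (n-1))) ≃* H := hcardH ▸ zmodCyclicMulEquiv hHcyc
    have e3 : Multiplicative (ZMod p) ≃* K := by
      have e : Multiplicative (ZMod (Nat.card K)) ≃* K := zmodCyclicMulEquiv (_root_.isCyclic_zpowers b₂)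
      rw [hcardK] at e; exact e
    exact Or.inr (Or.inl ⟨hn2, ⟨e1.symm.trans ((MulEquiv.prodCongr e2.symm e3.symm).trans
      (multiplicativeProdEquiv _ _).symm)⟩⟩)
  · -- nonabelian case
    have hconjp : (b₀ ^ p)⁻¹ * a * b₀ ^ p = a ^ (r ^ p) := conj_pow_lemma a b₀ r hr.symm p
    have hcommp : (b₀ ^ p)⁻¹ * a * b₀ ^ p = a := by
      have hcb : a * b₀ ^ p = b₀ ^ p * a := hcomm_H _ hb₀p
      rw [mul_assoc, hcb, ← mul_assoc, inv_mul_cancel, one_mul]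
    have hrp : r ^ p ≡ 1 [MOD p ^ (n-1)] := by
      have h1 : a ^ (r ^ p) = a ^ 1 := by
        rw [pow_one]
        calc a ^ (r ^ p) = (b₀ ^ p)⁻¹ * a * b₀ ^ p := hconjp.symm
        _ = a := hcommp
      have h2 := pow_eq_pow_iff_modEq.mp h1
      rwa [horder] at h2
    have hr0 : r ≠ 0 := by
      intro hc
      apply ha1
      rw [hc, pow_zero] at hr
      calc a = b₀ * (b₀⁻¹ * a * b₀) * b₀⁻¹ := by group
      _ = b₀ * 1 * b₀⁻¹ := by rw [← hr]
      _ = 1 := by group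
    have hrp1 : r ≡ 1 [MOD p] := by
      have h1 : r ^ p ≡ 1 [MOD p] := hrp.of_dvd (dvd_pow_self p (by omega : n - 1 ≠ 0))
      have h2 : ((r : ZMod p)) = 1 := by
        have h3 := (ZMod.natCast_eq_natCast_iff _ _ _).mpr h1
        push_cast at h3
        rwa [ZMod.pow_card] at h3
      exact (ZMod.natCast_eq_natCast_iff r 1 p).mp (by push_cast; rw [h2])
    obtain ⟨s, hs⟩ : ∃ s, r = 1 + p * s := by
      obtain ⟨s, hs⟩ := (Nat.modEq_iff_dvd' (by omega : 1 ≤ r)).mp hrp1.symm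
      exact ⟨s, by omega⟩
    haveI : NeZero (p^2) := ⟨pow_ne_zero _ hp.pos.ne'⟩
    have hsum : (((∑ i ∈ Finset.range p, r ^ i : ℕ)) : ZMod (p^2)) = (p : ZMod (p^2)) := by
      have hqq : ((p : ZMod (p^2))) * (p : ZMod (p^2)) = 0 := by
        rw [← Nat.cast_mul, ← pow_two, ZMod.natCast_self]
      have h2u : IsUnit (2 : ZMod (p^2)) := by
        rw [show ((2 : ZMod (p^2))) = ((2:ℕ) : ZMod (p^2)) by push_cast; ring,
          ZMod.isUnit_iff_coprime]
        exact (hodd.coprime_two_left).pow_right 2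
      have haux := aux_sum (p^2) p (p : ZMod (p^2)) (s : ZMod (p^2)) hqq hqq h2u
      rw [← haux]
      push_cast [hs]
      apply Finset.sum_congr rfl
      intro i _
      congr 1
      ring
    have hsum' : ∃ z : ℤ, (∑ i ∈ Finset.range p, (r:ℤ) ^ i) = p * (1 + p * z) := by
      have h1 : (∑ i ∈ Finset.range p, r ^ i : ℕ) ≡ p [MOD p^2] := by
        rw [← ZMod.natCast_eq_natCast_iff]
        exact hsum
      obtain ⟨z, hz⟩ := h1.dvd
      refine ⟨-z, ?_⟩
      push_cast at hz ⊢
      linear_combination (-1 : ℤ) * hz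
    obtain ⟨t, ht⟩ : ∃ t, r = 1 + p^(n-2) * t := by
      obtain ⟨z, hz⟩ := hsum'
      have hd1 : ((p:ℤ))^(n-1) ∣ (r:ℤ)^p - 1 := by
        obtain ⟨c, hc⟩ := hrp.dvd
        exact ⟨-c, by push_cast at hc ⊢; linear_combination (-1:ℤ) * hc⟩
      have hgeom : (r:ℤ)^p - 1 = ((r:ℤ) - 1) * (∑ i ∈ Finset.range p, (r:ℤ)^i) := by
        rw [← geom_sum_mul]; ring
      rw [hgeom, hz] at hd1
      have hrw : ((r:ℤ) - 1) * ((p:ℤ) * (1 + p*z)) = (((r:ℤ) - 1) * (1 + p*z)) * p := by ring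
      rw [hrw, show ((p:ℤ))^(n-1) = ((p:ℤ))^(n-2) * p by rw [← pow_succ]; congr 1; omega] at hd1
      have hd2 : ((p:ℤ))^(n-2) ∣ ((r:ℤ) - 1) * (1 + p * z) :=
        (mul_dvd_mul_iff_right (show (p:ℤ) ≠ 0 by exact_mod_cast hp.pos.ne')).mp hd1
      have hcop : IsCoprime ((p:ℤ)^(n-2)) (1 + p * z) :=
        IsCoprime.pow_left ⟨-z, 1, by ring⟩
      have hd3 : ((p:ℤ))^(n-2) ∣ (r:ℤ) - 1 := hcop.dvd_of_dvd_mul_right hd2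
      have hd4 : (p:ℕ)^(n-2) ∣ r - 1 := by
        have hcast : ((r - 1 : ℕ) : ℤ) = (r:ℤ) - 1 := by
          push_cast [Nat.cast_sub (by omega : 1 ≤ r)]; ring
        exact_mod_cast hcast ▸ hd3
      obtain ⟨t, ht⟩ := hd4
      exact ⟨t, by omega⟩
    have hpt : ¬ p ∣ t := by
      rintro ⟨t', ht'⟩
      apply hcomm
      rw [← hr]
      have he : r = 1 + p^(n-1) * t' := by
        rw [ht, ht']
        have : p^(n-2) * (p * t') = p^(n-1) * t' := by
          rw [← mul_assoc, mul_comm (p^(n-2)) p, ← pow_succ']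
          congr 2
          omega
        omega
      have h7 : a ^ r = a ^ 1 := by
        apply pow_eq_pow_iff_modEq.mpr
        rw [horder, he]
        show (1 + p^(n-1) * t') % (p^(n-1)) = 1 % (p^(n-1))
        simp [Nat.add_mul_mod_self_left]
      rw [h7, pow_one]
    have hn3 : 3 ≤ n := by
      by_contra hc
      have hn2' : n = 2 := by omega
      apply hpt
      rw [hn2'] at ht
      simp at ht
      have h8 := (Nat.modEq_iff_dvd' (by omega : 1 ≤ r)).mp hrp1.symm
      rwa [show r - 1 = t by omega] at h8
    set q : ℕ := p^(n-2) with hq_def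
    set M : ℕ := p^(n-1) with hM_def
    haveI : NeZero M := ⟨by rw [hM_def]; exact pow_ne_zero _ hp.pos.ne'⟩
    have hM1 : 1 ≤ M := Nat.one_le_iff_ne_zero.mpr (NeZero.ne M)
    have hMq : (q : ZMod M) * (q : ZMod M) = 0 := by
      rw [← Nat.cast_mul, ZMod.natCast_eq_zero_iff, hq_def, hM_def, ← pow_add]
      exact pow_dvd_pow p (by omega)
    have hMpq : ((p : ZMod M)) * (q : ZMod M) = 0 := by
      rw [← Nat.cast_mul, show p * q = M by rw [hq_def, hM_def, ← pow_succ']; congr 1; omega,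
        ZMod.natCast_self]
    have h2M : IsUnit (2 : ZMod M) := by
      rw [show ((2 : ZMod M)) = ((2:ℕ) : ZMod M) by push_cast; ring, ZMod.isUnit_iff_coprime,
        hM_def]
      exact (hodd.coprime_two_left).pow_right _
    obtain ⟨j, w, hjw, hpj⟩ := exists_inv_nat hp hpt
    set b : G := b₀ ^ j with hb_def
    have hbH : b ∉ H := by
      intro hc
      have h1 : ((b₀ : G ⧸ H)) ^ j = 1 := (QuotientGroup.eq_one_iff _).mpr hc
      have h2 : ((b₀ : G ⧸ H)) ≠ 1 := fun hx => hb₀ ((QuotientGroup.eq_one_iff _).mp hx)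
      have h3 : ((b₀ : G ⧸ H)) ^ p = 1 := by
        rw [← hHidx, Subgroup.index_eq_card]
        exact pow_card_eq_one'
      have h4 : orderOf ((b₀ : G ⧸ H)) = p := orderOf_eq_prime h3 h2
      exact hpj (h4 ▸ orderOf_dvd_of_pow_eq_one h1)
    have hbp : b ^ p ∈ H := by
      rw [hb_def, ← pow_mul, mul_comm, pow_mul]
      exact pow_mem hb₀p j
    have hjtq : ((j : ZMod M)) * t * q = q := by
      have hcast : ((t * j : ℕ) : ZMod M) = ((1 + p * w : ℕ) : ZMod M) := by rw [hjw]
      push_cast at hcast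
      calc ((j : ZMod M)) * t * q = ((t : ZMod M) * j) * q := by ring
      _ = (1 + (p : ZMod M) * w) * q := by rw [hcast]
      _ = q + w * ((p : ZMod M) * q) := by ring
      _ = (q : ZMod M) := by rw [hMpq]; ring
    have hRb : b⁻¹ * a * b = a ^ (1 + q) := by
      rw [hb_def, conj_pow_lemma a b₀ r hr.symm j]
      apply pow_eq_pow_iff_modEq.mpr
      rw [horder, ← ZMod.natCast_eq_natCast_iff]
      push_cast [ht]
      rw [mul_comm ((q : ℕ) : ZMod M) ((t : ℕ) : ZMod M),
        aux_pow M (q : ZMod M) (t : ZMod M) hMq j, hjtq]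
    set U : ℕ := 1 + (p-1) * q with hU_def
    have hRU : ((1 + q : ℕ) : ZMod M) * ((U : ℕ) : ZMod M) = 1 := by
      push_cast [hU_def, Nat.cast_sub hp.one_le]
      have he : ((1:ZMod M) + q) * (1 + ((p:ZMod M) - 1) * q)
          = 1 + (p:ZMod M) * q + ((p:ZMod M) - 1) * ((q:ZMod M) * q) := by ring
      rw [he, hMq, hMpq]
      ring
    have hconjU : b * a * b⁻¹ = a ^ U := by
      have hmem : b * a * b⁻¹ ∈ H := hHnormal.conj_mem a ha_mem b
      obtain ⟨m, hm⟩ := hpow _ hmem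
      have h1 : a = (b⁻¹ * (b * a * b⁻¹) * b) := by group
      rw [← hm] at h1
      have h2 : b⁻¹ * a ^ m * b = (b⁻¹ * a * b) ^ m := by
        have h2' : (b⁻¹ * a * b⁻¹⁻¹) ^ m = b⁻¹ * a ^ m * b⁻¹⁻¹ := conj_pow
        rw [inv_inv] at h2'
        exact h2'.symm
      rw [h2, hRb, ← pow_mul] at h1
      have h3 : (1 + q) * m ≡ 1 [MOD M] := by
        have h3' := pow_eq_pow_iff_modEq.mp (show a ^ ((1+q)*m) = a ^ 1 by rw [pow_one]; exact h1.symm)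
        rwa [horder] at h3'
      have hunit : IsUnit (((1 + q : ℕ)) : ZMod M) := IsUnit.of_mul_eq_one _ hRU
      have h4 : (m : ZMod M) = ((U : ℕ) : ZMod M) := by
        apply hunit.mul_left_cancel
        rw [hRU]
        have h5 := (ZMod.natCast_eq_natCast_iff _ _ _).mpr h3
        push_cast at h5 ⊢
        linear_combination h5
      rw [← hm]
      exact pow_eq_pow_iff_modEq.mpr (by
        rw [horder]
        exact (ZMod.natCast_eq_natCast_iff _ _ _).mp h4)
    obtain ⟨k, hk⟩ := hpow _ hbp
    obtain ⟨k', hk'⟩ := key_dvd hp hn2 hcard hG horder hk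
    set t₂ : ℕ := k' * (M - 1) with ht₂
    set b₂ : G := a ^ t₂ * b with hb₂def
    have hSp : ((∑ i ∈ Finset.range p, U ^ i : ℕ) : ZMod M) = (p : ZMod M) := by
      have haux := aux_sum M p (q : ZMod M) (((p - 1 : ℕ)) : ZMod M) hMq hMpq h2M
      rw [← haux]
      push_cast [hU_def]
      apply Finset.sum_congr rfl
      intro i _
      congr 1
    have hb₂p : b₂ ^ p = 1 := by
      rw [hb₂def, prod_pow_lemma a b U t₂ hconjU p, ← hk, ← pow_add]
      have h9 : a ^ (t₂ * ∑ i ∈ Finset.range p, U ^ i + k) = a ^ 0 := by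
        apply pow_eq_pow_iff_modEq.mpr
        rw [horder, ← ZMod.natCast_eq_natCast_iff, Nat.cast_add, Nat.cast_mul, hSp,
          Nat.cast_zero]
        have h6 : ((t₂ * p + k : ℕ) : ZMod M) = 0 := by
          rw [ZMod.natCast_eq_zero_iff]
          have e2 : M - 1 + 1 = M := by omega
          have e : t₂ * p + k = k' * p * M := by
            calc t₂ * p + k = k' * (M - 1) * p + p * k' := by rw [ht₂, hk']
            _ = k' * p * ((M - 1) + 1) := by ring
            _ = k' * p * M := by rw [e2]
          exact ⟨k' * p, by rw [e]; ring⟩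
        push_cast at h6
        linear_combination h6
      rw [h9, pow_zero]
    have hb₂H : b₂ ∉ H := by
      intro hc
      apply hbH
      have h5 := H.mul_mem (H.inv_mem (pow_mem ha_mem t₂)) hc
      rwa [hb₂def, ← mul_assoc, inv_mul_cancel, one_mul] at h5
    have hb₂1 : b₂ ≠ 1 := fun hc => hb₂H (hc ▸ H.one_mem)
    have horderb₂ : orderOf b₂ = p := orderOf_eq_prime hb₂p hb₂1
    have hrel : b₂⁻¹ * a * b₂ = a ^ (1 + q) := by
      have h10 : b₂⁻¹ * a * b₂ = b⁻¹ * ((a ^ t₂)⁻¹ * a * a ^ t₂) * b := by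
        rw [hb₂def]; group
      rw [h10, show (a ^ t₂)⁻¹ * a * a ^ t₂ = a by group, hRb]
    have hclosure : Subgroup.closure {a, b₂} = ⊤ := by
      apply aux_top hp hcard (H := H) ?_ ?_ hcardH
      · rw [← hHz, Subgroup.zpowers_le]
        exact Subgroup.subset_closure (by simp)
      · intro hc
        exact hb₂H (hc ▸ Subgroup.subset_closure (by simp : b₂ ∈ ({a, b₂} : Set G)))
    exact Or.inr (Or.inr ⟨hn3, a, b₂, horder, horderb₂, hrel, hclosure⟩)
end

section
/- Let X be a finite solvable group acting faithfully and 2-transitively on the coset space [X : M] for some subgroup M, where the index [X : M] is a composite number, and suppose X contains a subgroup isomorphic to the semidihedral group SD_{8n} (n ≥ 2) acting regularly. Then X contains no element of order p^k, where p^k = [X : M] is the degree. -/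
/-- `G` is the semidihedral group `SD_{8n}`. -/
def IsSemidihedral (n : ℕ) (G : Type*) [Group G] : Prop :=
  Nat.card G = 8 * n ∧ ∃ a b : G, orderOf a = 4 * n ∧ orderOf b = 2 ∧
    b⁻¹ * a * b = a ^ (2 * n - 1) ∧ Subgroup.closure {a, b} = ⊤

/-- 2-transitivity of the action of `G` on `Ω`. -/
def IsTwoTransitive (G Ω : Type*) [Group G] [MulAction G Ω] : Prop :=
  ∀ α β α' β' : Ω, α ≠ β → α' ≠ β' → ∃ g : G, g • α = α' ∧ g • β = β'

section AuxLemmas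

variable {X : Type*} [Group X] {M : Subgroup X}

omit [Group X] in
lemma aux_four_le_pow {k : ℕ} (hk : 4 ≤ k) : k ≤ 2 ^ (k - 2) := by
  induction k, hk using Nat.le_induction with
  | base => norm_num
  | succ m hm ih =>
    have h2 : m + 1 - 2 = (m - 2) + 1 := by omega
    rw [h2, pow_succ]
    have h1 : 1 ≤ 2 ^ (m - 2) := Nat.one_le_two_pow
    linarith

lemma aux_smul_one (g : X) : g • ((1 : X) : X ⧸ M) = ((1:X) : X ⧸ M) ↔ g ∈ M := by
  rw [MulAction.Quotient.smul_mk, QuotientGroup.eq, smul_eq_mul, mul_one, inv_mem_iff, mul_one]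

lemma aux_ker (hfaith : M.normalCore = ⊥) (g : X) (h : ∀ q : X ⧸ M, g • q = q) : g = 1 := by
  have hg : g ∈ M.normalCore := by
    rw [Subgroup.normalCore_eq_ker, MonoidHom.mem_ker]
    ext q
    exact h q
  rw [hfaith] at hg
  exact hg

/-- Any nontrivial normal subgroup of a faithful 2-transitive group is transitive. -/
lemma aux_trans (hfaith : M.normalCore = ⊥) (h2 : IsTwoTransitive X (X ⧸ M))
    (N : Subgroup X) (hN : N.Normal) (hNbot : N ≠ ⊥)
    (q q' : X ⧸ M) : ∃ a ∈ N, a • q = q' := by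
  obtain ⟨a₀, ha₀N, ha₀⟩ : ∃ a₀ ∈ N, a₀ ≠ 1 := by
    by_contra h
    push_neg at h
    exact hNbot ((Subgroup.eq_bot_iff_forall N).2 h)
  obtain ⟨q₀, hq₀⟩ : ∃ q₀ : X ⧸ M, a₀ • q₀ ≠ q₀ := by
    by_contra h
    push_neg at h
    exact ha₀ (aux_ker hfaith a₀ h)
  rcases eq_or_ne q q' with rfl | hqq'
  · exact ⟨1, N.one_mem, one_smul _ _⟩
  · obtain ⟨g, hg1, hg2⟩ := h2 q₀ (a₀ • q₀) q q' (Ne.symm hq₀) hqq'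
    refine ⟨g * a₀ * g⁻¹, hN.conj_mem a₀ ha₀N g, ?_⟩
    rw [← hg1, mul_smul, mul_smul, inv_smul_smul, hg2]

/-- A nontrivial abelian normal subgroup of a faithful 2-transitive group acts freely. -/
lemma aux_free (hfaith : M.normalCore = ⊥) (h2 : IsTwoTransitive X (X ⧸ M))
    (N : Subgroup X) (hN : N.Normal) (hNbot : N ≠ ⊥)
    (hcomm : ∀ a b : X, a ∈ N → b ∈ N → a * b = b * a)
    (a : X) (ha : a ∈ N) (q : X ⧸ M) (haq : a • q = q) : a = 1 := by
  apply aux_ker hfaith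
  intro q'
  obtain ⟨b, hbN, hb⟩ := aux_trans hfaith h2 N hN hNbot q q'
  rw [← hb, ← mul_smul, hcomm a b ha hbN, mul_smul, haq]

/-- A nontrivial abelian normal subgroup of a faithful 2-transitive group is regular. -/
lemma aux_card (hfaith : M.normalCore = ⊥) (h2 : IsTwoTransitive X (X ⧸ M))
    (N : Subgroup X) (hN : N.Normal) (hNbot : N ≠ ⊥)
    (hcomm : ∀ a b : X, a ∈ N → b ∈ N → a * b = b * a) :
    Nat.card N = Nat.card (X ⧸ M) := by
  apply Nat.card_eq_of_bijective (fun a : N => (a : X) • ((1 : X) : X ⧸ M))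
  constructor
  · intro a b hab
    have hab' : (a : X) • ((1 : X) : X ⧸ M) = (b : X) • ((1 : X) : X ⧸ M) := hab
    have : ((b : X)⁻¹ * a) • ((1 : X) : X ⧸ M) = ((1 : X) : X ⧸ M) := by
      rw [mul_smul, hab', inv_smul_smul]
    have h1 : (b : X)⁻¹ * a = 1 :=
      aux_free hfaith h2 N hN hNbot hcomm _ (N.mul_mem (N.inv_mem b.2) a.2) _ this
    have : (a : X) = b := by
      rw [← one_mul (a : X), ← mul_inv_cancel (b : X), mul_assoc, h1, mul_one]
    exact Subtype.ext this
  · intro q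
    obtain ⟨a, haN, ha⟩ := aux_trans hfaith h2 N hN hNbot ((1 : X) : X ⧸ M) q
    exact ⟨⟨a, haN⟩, ha⟩

end AuxLemmas

lemma aux_conj_pow {X : Type*} [Group X] [Finite X] (N : Subgroup X) (hN : N.Normal) (k : ℕ)
    (hcard : Nat.card N = 2 ^ k)
    (hcomm : ∀ a b : X, a ∈ N → b ∈ N → a * b = b * a)
    (hexp : ∀ a ∈ N, a ^ 2 = 1)
    (x : X) (hxord : x ^ (2 ^ k) = 1) (hkk : k ≤ 2 ^ (k - 2)) :
    ∀ a ∈ N, x ^ (2 ^ (k - 2)) * a * (x ^ (2 ^ (k - 2)))⁻¹ = a := by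
  letI : CommGroup N := { (inferInstance : Group N) with
    mul_comm := fun a b => Subtype.ext (hcomm a b a.2 b.2) }
  letI V := Additive (↥N)
  have hvv : ∀ v : V, v + v = 0 := by
    rintro (v : Additive ↥N)
    have h2 : (v.toMul : ↥N) * v.toMul = 1 := by
      have := hexp _ v.toMul.2
      exact Subtype.ext (by rw [← pow_two]; exact_mod_cast this)
    exact h2
  letI : Module (ZMod 2) V := AddCommGroup.zmodModule (by
    intro v; show (2 : ℕ) • v = 0; rw [two_nsmul]; exact hvv v)
  -- conjugation monoid hom
  let φ : ↥N →* ↥N :=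
    { toFun := fun a => ⟨x * a * x⁻¹, hN.conj_mem a a.2 x⟩
      map_one' := by ext; simp
      map_mul' := by intro a b; ext; simp }
  let f : Module.End (ZMod 2) V := (MonoidHom.toAdditive φ).toZModLinearMap 2
  have hfpow : ∀ (j : ℕ) (a : ↥N), ((((f ^ j) (Additive.ofMul a)).toMul : ↥N) : X)
      = x ^ j * (a : X) * (x ^ j)⁻¹ := by
    intro j
    induction j with
    | zero => intro a; simp
    | succ j ih =>
      intro a
      have : (f ^ (j + 1)) (Additive.ofMul a) = f ((f ^ j) (Additive.ofMul a)) := by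
        rw [pow_succ', Module.End.mul_apply]
      rw [this]
      have hf : ∀ v : V, ((f v).toMul : X) = x * (v.toMul : X) * x⁻¹ := fun v => rfl
      rw [hf, ih]
      group
  have hchar2 : ∀ h : Module.End (ZMod 2) V, h + h = 0 := by
    intro h; exact LinearMap.ext fun v => hvv (h v)
  have hf1 : f ^ (2 ^ k) = 1 := by
    apply LinearMap.ext
    intro v
    have h1 := hfpow (2 ^ k) v.toMul
    rw [hxord] at h1
    simp only [one_mul, inv_one, mul_one] at h1
    show (f ^ 2 ^ k) (Additive.ofMul v.toMul) = Additive.ofMul v.toMul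
    exact congrArg Additive.ofMul (Subtype.ext h1)
  set g : Module.End (ZMod 2) V := f + 1 with hg
  have fresh : ∀ t, f ^ (2 ^ t) = g ^ (2 ^ t) + 1 := by
    intro t; induction t with
    | zero =>
      rw [pow_zero, pow_one, pow_one, hg, add_assoc, hchar2 1, add_zero]
    | succ t ih =>
      have h2 : (2:ℕ) ^ (t+1) = 2 ^ t * 2 := by ring
      rw [h2, pow_mul, pow_mul, ih]
      generalize g ^ (2 ^ t) = a
      have hx : (a + 1) ^ 2 = a ^ 2 + (a + a) + 1 := by noncomm_ring
      rw [hx, hchar2 a, add_zero]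
  have hgk : g ^ (2 ^ k) = 0 := by
    have h := fresh k
    rw [hf1] at h
    have h' : g ^ (2 ^ k) + 1 = 0 + 1 := by rw [zero_add]; exact h.symm
    exact add_right_cancel h'
  haveI : Fintype V := Fintype.ofFinite V
  have hcardV : Fintype.card V = 2 ^ k := by
    rw [← Nat.card_eq_fintype_card]; exact hcard
  have hfr : Module.finrank (ZMod 2) V = k := by
    have h := Module.card_eq_pow_finrank (K := ZMod 2) (V := V)
    rw [ZMod.card, hcardV] at h
    exact (Nat.pow_right_injective (le_refl 2) h.symm)
  have hgknil : g ^ k = 0 := by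
    have hnil : IsNilpotent g := ⟨2 ^ k, hgk⟩
    have hcp := hnil.charpoly_eq_X_pow_finrank
    have h := LinearMap.aeval_self_charpoly g
    rw [hcp, map_pow, Polynomial.aeval_X, hfr] at h
    exact h
  have hsmall : g ^ (2 ^ (k - 2)) = 0 := by
    have : g ^ (2 ^ (k-2)) = g ^ k * g ^ (2 ^ (k-2) - k) := by
      rw [← pow_add, Nat.add_sub_cancel' hkk]
    rw [this, hgknil, zero_mul]
  have hfid : f ^ (2 ^ (k - 2)) = 1 := by
    rw [fresh (k - 2), hsmall, zero_add]
  intro a ha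
  have h1 := hfpow (2 ^ (k - 2)) ⟨a, ha⟩
  rw [hfid] at h1
  simpa using h1.symm

theorem stmt9 {X : Type*} [Group X] [Finite X] (hsolv : IsSolvable X)
    (M : Subgroup X)
    (hfaith : M.normalCore = ⊥)
    (h2trans : IsTwoTransitive X (X ⧸ M))
    (hcomp : 1 < M.index ∧ ¬ (M.index).Prime)
    (n : ℕ) (hn : 2 ≤ n) (G : Subgroup X) (hSD : IsSemidihedral n G)
    (hreg : ∀ α β : X ⧸ M, ∃! g : G, (g : X) • α = β)
    (p k : ℕ) (hp : p.Prime) (hpk : M.index = p ^ k) :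
    ∀ x : X, orderOf x ≠ p ^ k := by
  classical
  -- The degree equals `Nat.card (X ⧸ M) = M.index`.
  have hind : M.index = Nat.card (X ⧸ M) := rfl
  -- `G` is regular, so `Nat.card G = M.index`.
  have hcardG : Nat.card G = Nat.card (X ⧸ M) := by
    apply Nat.card_eq_of_bijective (fun g : G => (g : X) • ((1 : X) : X ⧸ M))
    constructor
    · intro a b hab
      obtain ⟨g, -, hguniq⟩ := hreg ((1 : X) : X ⧸ M) ((b : X) • ((1 : X) : X ⧸ M))
      rw [hguniq a hab, hguniq b rfl]
    · intro q
      obtain ⟨g, hg, -⟩ := hreg ((1 : X) : X ⧸ M) q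
      exact ⟨g, hg⟩
  have h8n : 8 * n = p ^ k := by rw [← hSD.1, hcardG, ← hind, hpk]
  -- hence `p = 2` and `k ≥ 4`.
  have hp2 : p = 2 := by
    have h2 : 2 ∣ p ^ k := by rw [← h8n]; omega
    have := (Nat.prime_dvd_prime_iff_eq Nat.prime_two hp).1 (Nat.Prime.dvd_of_dvd_pow Nat.prime_two h2)
    omega
  subst hp2
  have hk4 : 4 ≤ k := by
    have h16 : 2 ^ 4 ≤ 2 ^ k := by rw [← h8n]; omega
    exact (Nat.pow_le_pow_iff_right (le_refl 2)).1 h16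
  -- `X` is nontrivial.
  have hXnt : Nontrivial X := by
    have hFt : Fintype X := Fintype.ofFinite X
    rw [← Fintype.one_lt_card_iff_nontrivial, ← Nat.card_eq_fintype_card]
    exact lt_of_lt_of_le hcomp.1 (Nat.le_of_dvd Nat.card_pos M.index_dvd_card)
  -- The last nontrivial term of the derived series: an abelian nontrivial normal subgroup.
  obtain ⟨m, hm⟩ := hsolv
  have hex : ∃ m, derivedSeries X m = ⊥ := ⟨m, hm⟩
  set m₀ := Nat.find hex with hm₀
  have hm₀bot : derivedSeries X m₀ = ⊥ := Nat.find_spec hex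
  have hm₀pos : 0 < m₀ := by
    rcases Nat.eq_zero_or_pos m₀ with h0 | h
    · exfalso
      have := hm₀bot
      rw [h0, derivedSeries_zero] at this
      obtain ⟨y, z, hyz⟩ := exists_pair_ne X
      exact hyz (by
        have hy : y ∈ (⊥ : Subgroup X) := this ▸ Subgroup.mem_top y
        have hz : z ∈ (⊥ : Subgroup X) := this ▸ Subgroup.mem_top z
        rw [Subgroup.mem_bot] at hy hz
        rw [hy, hz])
    · exact h
  set A := derivedSeries X (m₀ - 1) with hA
  have hAnormal : A.Normal := derivedSeries_normal X (m₀ - 1)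
  have hAbot : A ≠ ⊥ := Nat.find_min hex (by omega)
  have hAcomm : ∀ a b : X, a ∈ A → b ∈ A → a * b = b * a := by
    intro a b ha hb
    open scoped commutatorElement in have hcm : ⁅a, b⁆ ∈ ⁅A, A⁆ := Subgroup.commutator_mem_commutator ha hb
    have h1 : m₀ - 1 + 1 = m₀ := by omega
    rw [hA, ← derivedSeries_succ, h1, hm₀bot, Subgroup.mem_bot] at hcm
    exact commutatorElement_eq_one_iff_mul_comm.1 hcm
  have hAcard : Nat.card A = 2 ^ k := by
    rw [aux_card hfaith h2trans A hAnormal hAbot hAcomm, ← hind, hpk]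
  -- The subgroup of elements of `A` of order dividing 2.
  let N : Subgroup X :=
    { carrier := {a | a ∈ A ∧ a ^ 2 = 1}
      one_mem' := ⟨A.one_mem, one_pow 2⟩
      mul_mem' := by
        rintro a b ⟨haA, ha⟩ ⟨hbA, hb⟩
        refine ⟨A.mul_mem haA hbA, ?_⟩
        have hc : Commute a b := hAcomm a b haA hbA
        rw [hc.mul_pow, ha, hb, mul_one]
      inv_mem' := by
        rintro a ⟨haA, ha⟩
        exact ⟨A.inv_mem haA, by rw [inv_pow, ha, inv_one]⟩ }
  have hNle : ∀ a ∈ N, a ∈ A := fun a ha => ha.1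
  have hNexp : ∀ a ∈ N, a ^ 2 = 1 := fun a ha => ha.2
  have hNnormal : N.Normal := by
    constructor
    rintro a ⟨haA, ha⟩ g
    refine ⟨hAnormal.conj_mem a haA g, ?_⟩
    rw [conj_pow, ha, mul_one, mul_inv_cancel]
  -- `N` is nontrivial by Cauchy's theorem.
  have hNbot : N ≠ ⊥ := by
    have h2dvd : 2 ∣ Nat.card A := by
      rw [hAcard]
      exact dvd_pow_self 2 (by omega)
    obtain ⟨a, ha⟩ := exists_prime_orderOf_dvd_card' (G := A) 2 h2dvd
    intro hbot
    have haN : (a : X) ∈ N := by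
      refine ⟨a.2, ?_⟩
      have : (a : A) ^ 2 = 1 := by rw [← ha]; exact pow_orderOf_eq_one a
      exact_mod_cast congrArg (Subtype.val) this
    rw [hbot, Subgroup.mem_bot] at haN
    have : orderOf a = 1 := by
      rw [orderOf_eq_one_iff]
      exact Subtype.ext haN
    omega
  have hNcomm : ∀ a b : X, a ∈ N → b ∈ N → a * b = b * a :=
    fun a b ha hb => hAcomm a b ha.1 hb.1
  have hNcard : Nat.card N = 2 ^ k := by
    rw [aux_card hfaith h2trans N hNnormal hNbot hNcomm, ← hind, hpk]
  -- Anything centralizing `N` lies in `N`.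
  have hcent : ∀ c : X, (∀ a ∈ N, c * a = a * c) → c ∈ N := by
    intro c hc
    obtain ⟨a, haN, ha⟩ := aux_trans hfaith h2trans N hNnormal hNbot
      (c • ((1 : X) : X ⧸ M)) ((1 : X) : X ⧸ M)
    have hfix : ∀ q : X ⧸ M, (a * c) • q = q := by
      intro q
      obtain ⟨b, hbN, hb⟩ := aux_trans hfaith h2trans N hNnormal hNbot ((1 : X) : X ⧸ M) q
      have hcb : a * c * b = b * (a * c) := by
        rw [mul_assoc, hc b hbN, ← mul_assoc, hNcomm a b haN hbN, mul_assoc]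
      rw [← hb, ← mul_smul, hcb, mul_smul, mul_smul, ha]
    have : a * c = 1 := aux_ker hfaith _ hfix
    have hca : c = a⁻¹ := by
      rw [← one_mul c, ← inv_mul_cancel a, mul_assoc, this, mul_one]
    rw [hca]
    exact N.inv_mem haN
  -- Final contradiction.
  intro x hx
  have hxord : x ^ (2 ^ k) = 1 := by rw [← hx]; exact pow_orderOf_eq_one x
  have hconj := aux_conj_pow N hNnormal k hNcard hNcomm hNexp x hxord (aux_four_le_pow hk4)
  have hcentx : ∀ a ∈ N, x ^ (2 ^ (k - 2)) * a = a * x ^ (2 ^ (k - 2)) := by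
    intro a ha
    have := hconj a ha
    calc x ^ (2 ^ (k - 2)) * a
        = (x ^ (2 ^ (k - 2)) * a * (x ^ (2 ^ (k - 2)))⁻¹) * x ^ (2 ^ (k - 2)) := by group
      _ = a * x ^ (2 ^ (k - 2)) := by rw [this]
  have hxN : x ^ (2 ^ (k - 2)) ∈ N := hcent _ hcentx
  have hxsq : (x ^ (2 ^ (k - 2))) ^ 2 = 1 := hNexp _ hxN
  rw [← pow_mul] at hxsq
  have hdvd : orderOf x ∣ 2 ^ (k - 2) * 2 := orderOf_dvd_of_pow_eq_one hxsq
  rw [hx, ← pow_succ] at hdvd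
  have hle : 2 ^ k ≤ 2 ^ (k - 2 + 1) := Nat.le_of_dvd (by positivity) hdvd
  have : k ≤ k - 2 + 1 := (Nat.pow_le_pow_iff_right (le_refl 2)).1 hle
  omega
end

section
/- There is no finite solvable group X = G⟨c⟩ with G ≅ SD_{8n} (n ≥ 2), ⟨c⟩ cyclic with G ∩ ⟨c⟩ = 1 and ⟨c⟩ core-free in X, such that the action of X on the cosets [X : ⟨c⟩] is 2-transitive of composite degree. -/
open Pointwise

private lemma mem_normalCore_iff {X : Type*} [Group X] (H : Subgroup X) (g : X) :
    g ∈ H.normalCore ↔ ∀ b : X, b * g * b⁻¹ ∈ H := Iff.rfl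

theorem stmt10 {X : Type*} [Group X] [Finite X] (hsolv : IsSolvable X)
    (G : Subgroup X) (c : X) (n : ℕ) (hn : 2 ≤ n) (hSD : IsSemidihedral n G)
    (hprod : (G : Set X) * (Subgroup.zpowers c : Set X) = Set.univ)
    (hint : G ⊓ Subgroup.zpowers c = ⊥)
    (hcore : (Subgroup.zpowers c).normalCore = ⊥)
    (h2trans : IsTwoTransitive X (X ⧸ Subgroup.zpowers c))
    (hcomp : 1 < (Subgroup.zpowers c).index ∧ ¬ (Subgroup.zpowers c).index.Prime) :
    False := by
  classical
  set H := Subgroup.zpowers c with hHdef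
  -- smul on the quotient
  have hsmul : ∀ g x : X, g • ((x : X) : X ⧸ H) = ((g * x : X) : X ⧸ H) := fun g x => rfl
  -- an element fixing all cosets is trivial
  have hfixall : ∀ g : X, (∀ ω : X ⧸ H, g • ω = ω) → g = 1 := by
    intro g hg
    have hmem : g⁻¹ ∈ H.normalCore := by
      rw [mem_normalCore_iff]
      intro b
      have h1 := hg ((b⁻¹ : X) : X ⧸ H)
      rw [hsmul] at h1
      have h2 := QuotientGroup.eq.mp h1
      simpa [mul_assoc, mul_inv_rev] using h2
    rw [hcore, Subgroup.mem_bot] at hmem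
    simpa using congrArg (·⁻¹) hmem
  -- the base point
  set base : X ⧸ H := ((1 : X) : X ⧸ H) with hbasedef
  have hstab : ∀ g : X, g • base = base ↔ g ∈ H := by
    intro g
    rw [← MulAction.mem_stabilizer_iff, MulAction.stabilizer_quotient H]
  -- complement facts
  have hcompl : Subgroup.IsComplement' G H :=
    Subgroup.isComplement'_of_disjoint_and_mul_eq_univ (disjoint_iff.mpr hint) hprod
  have hidx : H.index = Nat.card G := hcompl.index_eq_card
  have hd2 : 1 < H.index := hcomp.1
  have hcardΩ : Nat.card (X ⧸ H) = H.index := (Subgroup.index_eq_card H).symm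
  -- H acts transitively on the complement of the base point
  have htrans_compl : ∀ β γ : X ⧸ H, β ≠ base → γ ≠ base → ∃ h ∈ H, h • β = γ := by
    intro β γ hβ hγ
    obtain ⟨g, hg1, hg2⟩ := h2trans base β base γ (Ne.symm hβ) (Ne.symm hγ)
    exact ⟨g, (hstab g).mp hg1, hg2⟩
  -- H is commutative
  have hHcomm : ∀ x ∈ H, ∀ y ∈ H, x * y = y * x := by
    rintro x hx y hy
    obtain ⟨i, rfl⟩ := Subgroup.mem_zpowers_iff.mp hx
    obtain ⟨j, rfl⟩ := Subgroup.mem_zpowers_iff.mp hy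
    rw [← zpow_add, ← zpow_add, add_comm]
  -- H acts freely on the complement of the base point
  have hfree : ∀ h ∈ H, ∀ β : X ⧸ H, β ≠ base → h • β = β → h = 1 := by
    intro h hh β hβ hfix
    apply hfixall
    intro ω
    by_cases hω : ω = base
    · rw [hω]; exact (hstab h).mpr hh
    · obtain ⟨k, hk, hkβ⟩ := htrans_compl β ω hβ hω
      rw [← hkβ, smul_smul, hHcomm h hh k hk, ← smul_smul, hfix]
  -- a point different from base
  have hΩnontriv : Nontrivial (X ⧸ H) := by
    rw [← Finite.one_lt_card_iff_nontrivial, hcardΩ]; exact hd2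
  obtain ⟨γ, hγ⟩ := exists_ne base
  -- Nat.card H = H.index - 1
  have hγbase : ∀ h : H, (h : X) • γ ≠ base := by
    intro h hc
    apply hγ
    have h1 : ((h : X)⁻¹) • ((h : X) • γ) = ((h : X)⁻¹) • base := by rw [hc]
    rw [inv_smul_smul, (hstab _).mpr (H.inv_mem h.2)] at h1
    exact h1
  have hcardH : Nat.card H = H.index - 1 := by
    have e : H ≃ {β : X ⧸ H // β ≠ base} := by
      refine Equiv.ofBijective (fun h => ⟨(h : X) • γ, hγbase h⟩) ⟨?_, ?_⟩
      · intro h₁ h₂ hh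
        have h1 : (h₁ : X) • γ = (h₂ : X) • γ := congrArg Subtype.val hh
        have h2 : ((h₂ : X)⁻¹ * h₁) • γ = γ := by
          rw [mul_smul, h1, inv_smul_smul]
        have h3 := hfree _ (H.mul_mem (H.inv_mem h₂.2) h₁.2) γ hγ h2
        have : (h₁ : X) = h₂ := by
          have := congrArg (fun z => (h₂ : X) * z) h3
          simpa [mul_assoc] using this
        exact Subtype.ext this
      · rintro ⟨β, hβ⟩
        obtain ⟨k, hk, hkγ⟩ := htrans_compl γ β hγ hβ
        exact ⟨⟨k, hk⟩, Subtype.ext hkγ⟩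
    have h1 : Nat.card H = Nat.card {β : X ⧸ H // β ≠ base} := Nat.card_congr e
    have : Fintype (X ⧸ H) := Fintype.ofFinite _
    have h2 : Nat.card {β : X ⧸ H // β ≠ base} = Nat.card (X ⧸ H) - 1 := by
      rw [Nat.card_eq_fintype_card, Nat.card_eq_fintype_card]
      have h3 : Fintype.card {β : X ⧸ H // ¬ (β = base)} =
          Fintype.card (X ⧸ H) - Fintype.card {β : X ⧸ H // β = base} :=
        Fintype.card_subtype_compl _
      rw [Fintype.card_subtype_eq] at h3
      exact h3
    rw [h1, h2, hcardΩ]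
  have hcardX : Nat.card X = (H.index - 1) * H.index := by
    rw [← Subgroup.card_mul_index H, hcardH]
  -- a nontrivial abelian normal subgroup
  have hXnontriv : Nontrivial X := by
    obtain ⟨ω₁, ω₂, hne⟩ := hΩnontriv
    exact ⟨ω₁.out, ω₂.out, fun hcon => hne (Quotient.out_injective hcon)⟩
  have key : ∀ k, derivedSeries X k = ⊥ →
      ∃ N : Subgroup X, N.Normal ∧ N ≠ ⊥ ∧ ∀ x ∈ N, ∀ y ∈ N, x * y = y * x := by
    intro k
    induction k with
    | zero =>
      intro h
      rw [derivedSeries_zero] at h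
      exact absurd h top_ne_bot
    | succ k ih =>
      intro h
      by_cases hk' : derivedSeries X k = ⊥
      · exact ih hk'
      · refine ⟨derivedSeries X k, derivedSeries_normal X k, hk', ?_⟩
        rw [derivedSeries_succ] at h
        intro x hx y hy
        have h1 := Subgroup.commutator_eq_bot_iff_le_centralizer.mp h hx
        exact (Subgroup.mem_centralizer_iff.mp h1 y hy).symm
  obtain ⟨k, hk⟩ := isSolvable_def X |>.mp hsolv
  obtain ⟨N, hNnormal, hNbot, hNcomm⟩ := key k hk
  -- N acts transitively on the quotient
  obtain ⟨g, hgN, hg1⟩ : ∃ g ∈ N, g ≠ 1 := by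
    by_contra hcon
    push_neg at hcon
    exact hNbot ((Subgroup.eq_bot_iff_forall N).mpr hcon)
  obtain ⟨α, hα⟩ : ∃ α : X ⧸ H, g • α ≠ α := by
    by_contra hcon
    push_neg at hcon
    exact hg1 (hfixall g hcon)
  have hNtrans : ∀ β γ' : X ⧸ H, ∃ m ∈ N, m • β = γ' := by
    intro β γ'
    by_cases hbg : β = γ'
    · exact ⟨1, N.one_mem, by simp [hbg]⟩
    · obtain ⟨x, hx1, hx2⟩ := h2trans α (g • α) β γ' (Ne.symm hα) hbg
      refine ⟨x * g * x⁻¹, hNnormal.conj_mem g hgN x, ?_⟩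
      rw [← hx1, smul_smul, inv_mul_cancel_right, mul_smul, hx2]
  -- N acts freely, hence regularly, so Nat.card N = H.index
  have hNfree : ∀ m ∈ N, ∀ δ : X ⧸ H, m • δ = δ → m = 1 := by
    intro m hm δ hfix
    apply hfixall
    intro ω
    obtain ⟨p, hp, hpδ⟩ := hNtrans δ ω
    rw [← hpδ, smul_smul, hNcomm m hm p hp, ← smul_smul, hfix]
  have hcardN : Nat.card N = H.index := by
    rw [← hcardΩ]
    refine Nat.card_congr (Equiv.ofBijective (fun m : N => (m : X) • base) ⟨?_, ?_⟩)
    · intro m₁ m₂ hm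
      have hm' : (m₁ : X) • base = (m₂ : X) • base := hm
      have h2 : ((m₂ : X)⁻¹ * m₁) • base = base := by
        rw [mul_smul, hm', inv_smul_smul]
      have h3 := hNfree _ (N.mul_mem (N.inv_mem m₂.2) m₁.2) base h2
      have : (m₁ : X) = m₂ := by
        have := congrArg (fun z => (m₂ : X) * z) h3
        simpa [mul_assoc] using this
      exact Subtype.ext this
    · intro ω
      obtain ⟨m, hm, hmω⟩ := hNtrans base ω
      exact ⟨⟨m, hm⟩, hmω⟩
  -- index of N is H.index - 1
  have hNindex : N.index = H.index - 1 := by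
    have h1 : Nat.card N * N.index = Nat.card X := Subgroup.card_mul_index N
    rw [hcardN, hcardX, mul_comm (H.index - 1) H.index] at h1
    exact Nat.eq_of_mul_eq_mul_left (by omega) h1
  -- the image of G in X ⧸ N is trivial, so G ≤ N
  haveI := hNnormal
  set f : G →* X ⧸ N := (QuotientGroup.mk' N).comp (Subgroup.subtype G) with hfdef
  have hker_range : Nat.card f.range * Nat.card f.ker = Nat.card G := by
    rw [← Nat.card_congr (QuotientGroup.quotientKerEquivRange f).toEquiv]
    exact (Subgroup.card_eq_card_quotient_mul_card_subgroup f.ker).symm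
  have hdvd1 : Nat.card f.range ∣ H.index := by
    rw [hidx]
    exact ⟨Nat.card f.ker, hker_range.symm⟩
  have hdvd2 : Nat.card f.range ∣ H.index - 1 := by
    have h1 := Subgroup.card_subgroup_dvd_card f.range
    rwa [← Subgroup.index_eq_card N, hNindex] at h1
  have hrange1 : Nat.card f.range = 1 := by
    have h1 : Nat.card f.range ∣ H.index - (H.index - 1) := Nat.dvd_sub hdvd1 hdvd2
    have h2 : H.index - (H.index - 1) = 1 := by omega
    rwa [h2, Nat.dvd_one] at h1
  have hGN : ∀ x : X, x ∈ G → x ∈ N := by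
    intro x hx
    have h1 : f ⟨x, hx⟩ ∈ f.range := ⟨⟨x, hx⟩, rfl⟩
    rw [(Subgroup.card_eq_one).mp hrange1, Subgroup.mem_bot] at h1
    exact (QuotientGroup.eq_one_iff x).mp h1
  -- contradiction with the semidihedral structure
  obtain ⟨hcard, a, b, ha, hb, hrel, hclos⟩ := hSD
  have hcommab : (a : X) * b = (b : X) * a :=
    hNcomm _ (hGN _ a.2) _ (hGN _ b.2)
  have hab : a * b = b * a := Subtype.ext (by simpa using hcommab)
  have heq : b⁻¹ * a * b = a := by
    rw [mul_assoc, hab, ← mul_assoc, inv_mul_cancel, one_mul]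
  rw [hrel] at heq
  have h1 : a ^ (2 * n - 1) = a ^ 1 := by simpa using heq
  have h2 := (pow_eq_pow_iff_modEq).mp h1
  rw [ha] at h2
  have h3 : 4 * n ∣ 2 * n - 1 - 1 := (Nat.modEq_iff_dvd' (by omega)).mp h2.symm
  have h4 : 4 * n ≤ 2 * n - 1 - 1 := Nat.le_of_dvd (by omega) h3
  omega
end

section
/- Let X = G⟨c⟩ with G = ⟨a, b⟩ ≅ SD_{8n} (n ≥ 2), ⟨c⟩ cyclic, G ∩ ⟨c⟩ = 1, the core of ⟨c⟩ in X trivial, ⟨a⟩⟨c⟩ ≤ X, and suppose ⟨a⟩ is normal in X. Then c² normalizes G; moreover, if b normalizes the subgroup ⟨a²⟩⟨c⟩, then G is normal in X. -/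
open Pointwise Subgroup

set_option maxHeartbeats 1600000

theorem stmt13 {X : Type*} [Group X] [Finite X] (n m : ℕ) (hn : 2 ≤ n) (hm : 2 ≤ m)
    (a b c : X)
    (ha : orderOf a = 4 * n) (hb : orderOf b = 2)
    (hab : b⁻¹ * a * b = a ^ (2 * n - 1))
    (hG : Nat.card (closure ({a, b} : Set X)) = 8 * n)
    (hc : orderOf c = m)
    (hprod : (closure ({a, b} : Set X) : Set X) * (zpowers c : Set X) = Set.univ)
    (hint : closure ({a, b} : Set X) ⊓ zpowers c = ⊥)
    (hcore : (zpowers c).normalCore = ⊥)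
    (hM : ∃ M : Subgroup X, (M : Set X) = (zpowers a : Set X) * (zpowers c : Set X))
    (hanorm : (zpowers a).Normal) :
    c ^ 2 ∈ Subgroup.normalizer ((closure ({a, b} : Set X) : Set X)) ∧
    (∀ M₂ : Subgroup X, (M₂ : Set X) = (zpowers (a ^ 2) : Set X) * (zpowers c : Set X) →
      b ∈ Subgroup.normalizer (M₂ : Set X) → (closure ({a, b} : Set X)).Normal) := by
  classical
  set G := closure ({a, b} : Set X) with hGdef
  haveI : NeZero (4 * n) := ⟨by omega⟩
  haveI : NeZero m := ⟨by omega⟩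
  -- basic facts
  have hb2 : b * b = 1 := by
    have h := pow_orderOf_eq_one b
    rwa [hb, pow_two] at h
  have hbi : b⁻¹ = b := inv_eq_of_mul_eq_one_right hb2
  have haG : a ∈ G := subset_closure (by simp)
  have hbG : b ∈ G := subset_closure (by simp)
  -- conjugation helpers
  have conj_zpow' : ∀ (g x : X) (z : ℤ), g⁻¹ * x ^ z * g = (g⁻¹ * x * g) ^ z := fun g x z => by
    simpa [inv_inv] using (conj_zpow (i := z) (a := g⁻¹) (b := x)).symm
  have conj_pow' : ∀ (g x : X) (k : ℕ), g⁻¹ * x ^ k * g = (g⁻¹ * x * g) ^ k := fun g x k => by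
    simpa [inv_inv] using (conj_pow (i := k) (a := g⁻¹) (b := x)).symm
  -- power-vanishing criteria
  have haz : ∀ z : ℤ, a ^ z = 1 ↔ ((z : ZMod (4 * n)) = 0) := fun z => by
    rw [ZMod.intCast_zmod_eq_zero_iff_dvd, ← orderOf_dvd_iff_zpow_eq_one, ha]
  have hcz : ∀ z : ℤ, c ^ z = 1 ↔ ((z : ZMod m) = 0) := fun z => by
    rw [ZMod.intCast_zmod_eq_zero_iff_dvd, ← orderOf_dvd_iff_zpow_eq_one, hc]
  have apow : ∀ z w : ℤ, a ^ z = a ^ w ↔ ((z : ZMod (4 * n)) = (w : ZMod (4 * n))) := by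
    intro z w
    rw [← mul_inv_eq_one, ← zpow_sub, haz, Int.cast_sub, sub_eq_zero]
  -- trivial intersection
  have triv : ∀ z w : ℤ, a ^ z = c ^ w → a ^ z = 1 ∧ c ^ w = 1 := by
    intro z w h
    have h1 : a ^ z ∈ G ⊓ zpowers c := by
      refine ⟨G.zpow_mem haG z, ?_⟩
      rw [h]; exact zpow_mem (mem_zpowers c) w
    rw [hint] at h1
    have h2 : a ^ z = 1 := by simpa using h1
    exact ⟨h2, by rw [← h, h2]⟩
  -- b does not lie in ⟨a⟩
  have hbna : b ∉ zpowers a := by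
    intro hmem
    have hle : G ≤ zpowers a := (closure_le _).mpr (by
      intro x hx
      simp only [Set.mem_insert_iff, Set.mem_singleton_iff] at hx
      rcases hx with rfl | rfl
      · exact mem_zpowers _
      · exact hmem)
    have hcard := Subgroup.card_le_of_le hle
    rw [hG, Nat.card_zpowers, ha] at hcard
    omega
  -- conjugation of powers of a by b
  have hs : b⁻¹ * a * b = a ^ (2 * (n : ℤ) - 1) := by
    rw [hab, ← zpow_natCast]
    congr 1
    omega
  have conj_b : ∀ z : ℤ, b⁻¹ * a ^ z * b = a ^ (z * (2 * (n : ℤ) - 1)) := fun z => by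
    rw [conj_zpow', hs, ← zpow_mul, mul_comm]
  have bswap : ∀ z : ℤ, b * a ^ z = a ^ (z * (2 * (n : ℤ) - 1)) * b := by
    intro z
    have h := conj_b z
    rw [hbi] at h
    apply mul_right_cancel (b := b)
    rw [h, mul_assoc, hb2, mul_one]
  -- conjugation of a by c
  obtain ⟨r, hr⟩ := mem_zpowers_iff.mp (by
    simpa [inv_inv] using hanorm.conj_mem a (mem_zpowers a) c⁻¹ :
      c⁻¹ * a * c ∈ zpowers a)
  obtain ⟨r₂, hr₂⟩ := mem_zpowers_iff.mp (by
    simpa using hanorm.conj_mem a (mem_zpowers a) c :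
      c * a * c⁻¹ ∈ zpowers a)
  have conj_ac' : ∀ z : ℤ, c⁻¹ * a ^ z * c = a ^ (z * r) := fun z => by
    rw [conj_zpow', ← hr, ← zpow_mul, mul_comm]
  have conj_ac : ∀ z : ℤ, a ^ z * c = c * a ^ (z * r) := fun z => by
    rw [← conj_ac' z]; group
  have conj_ca' : ∀ z : ℤ, c * a ^ z * c⁻¹ = a ^ (z * r₂) := fun z => by
    have h : c * a ^ z * c⁻¹ = (c * a * c⁻¹) ^ z := by
      simpa [inv_inv] using (conj_zpow (i := z) (a := c) (b := a)).symm
    rw [h, ← hr₂, ← zpow_mul, mul_comm]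
  have conj_ca : ∀ z : ℤ, c * a ^ z = a ^ (z * r₂) * c := fun z => by
    rw [← conj_ca' z]; group
  have conj_ac_pow : ∀ (j : ℕ) (z : ℤ), a ^ z * c ^ j = c ^ j * a ^ (z * r ^ j) := by
    intro j
    induction j with
    | zero => intro z; simp
    | succ j ih =>
      intro z
      calc a ^ z * c ^ (j + 1) = (a ^ z * c ^ j) * c := by rw [pow_succ, mul_assoc]
        _ = (c ^ j * a ^ (z * r ^ j)) * c := by rw [ih]
        _ = c ^ j * (a ^ (z * r ^ j) * c) := by rw [mul_assoc]
        _ = c ^ j * (c * a ^ (z * r ^ j * r)) := by rw [conj_ac]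
        _ = c ^ (j + 1) * a ^ (z * r ^ (j + 1)) := by
            rw [← mul_assoc, ← pow_succ]
            congr 1
            ring
  have conj_ca_pow : ∀ (j : ℕ) (z : ℤ), c ^ j * a ^ z = a ^ (z * r₂ ^ j) * c ^ j := by
    intro j
    induction j with
    | zero => intro z; simp
    | succ j ih =>
      intro z
      calc c ^ (j + 1) * a ^ z = c ^ j * (c * a ^ z) := by rw [pow_succ, mul_assoc]
        _ = c ^ j * (a ^ (z * r₂) * c) := by rw [conj_ca]
        _ = (c ^ j * a ^ (z * r₂)) * c := by rw [mul_assoc]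
        _ = (a ^ (z * r₂ * r₂ ^ j) * c ^ j) * c := by rw [ih]
        _ = a ^ (z * r₂ ^ (j + 1)) * c ^ (j + 1) := by
            rw [mul_assoc, ← pow_succ]
            congr 1
            ring
  -- r is a unit mod 4n
  have hκunit : IsUnit ((r : ZMod (4 * n))) := by
    have e : a ^ (r₂ * r) = a ^ (1 : ℤ) := by
      rw [zpow_one]
      calc a ^ (r₂ * r) = (a ^ r₂) ^ r := by rw [zpow_mul]
        _ = (c * a * c⁻¹) ^ r := by rw [hr₂]
        _ = c * a ^ r * c⁻¹ := conj_zpow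
        _ = c * (c⁻¹ * a * c) * c⁻¹ := by rw [hr]
        _ = a := by group
    have h0 := (apow _ _).mp e
    push_cast at h0
    exact IsUnit.of_mul_eq_one ((r₂ : ℤ) : ZMod (4 * n)) (by linear_combination h0)
  -- structure of G
  have struct : ∀ g ∈ G, ∃ z : ℤ, g = a ^ z ∨ g = a ^ z * b := by
    intro g hg
    induction hg using closure_induction with
    | mem x hx =>
      simp only [Set.mem_insert_iff, Set.mem_singleton_iff] at hx
      rcases hx with rfl | rfl
      · exact ⟨1, Or.inl (zpow_one x).symm⟩
      · exact ⟨0, Or.inr (by rw [zpow_zero, one_mul])⟩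
    | one => exact ⟨0, Or.inl (by rw [zpow_zero])⟩
    | mul x y hx hy ihx ihy =>
      obtain ⟨z1, h1 | h1⟩ := ihx <;> obtain ⟨z2, h2 | h2⟩ := ihy
      · exact ⟨z1 + z2, Or.inl (by rw [h1, h2, zpow_add])⟩
      · exact ⟨z1 + z2, Or.inr (by rw [h1, h2, zpow_add, mul_assoc])⟩
      · refine ⟨z1 + z2 * (2 * (n : ℤ) - 1), Or.inr ?_⟩
        rw [h1, h2]
        calc (a ^ z1 * b) * a ^ z2 = a ^ z1 * (b * a ^ z2) := by group
          _ = a ^ z1 * (a ^ (z2 * (2 * (n : ℤ) - 1)) * b) := by rw [bswap]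
          _ = a ^ (z1 + z2 * (2 * (n : ℤ) - 1)) * b := by rw [zpow_add]; group
      · refine ⟨z1 + z2 * (2 * (n : ℤ) - 1), Or.inl ?_⟩
        rw [h1, h2]
        calc (a ^ z1 * b) * (a ^ z2 * b) = a ^ z1 * (b * a ^ z2) * b := by group
          _ = a ^ z1 * (a ^ (z2 * (2 * (n : ℤ) - 1)) * b) * b := by rw [bswap]
          _ = (a ^ z1 * a ^ (z2 * (2 * (n : ℤ) - 1))) * (b * b) := by group
          _ = a ^ (z1 + z2 * (2 * (n : ℤ) - 1)) := by rw [hb2, mul_one, ← zpow_add]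
    | inv x hx ihx =>
      obtain ⟨z, h | h⟩ := ihx
      · exact ⟨-z, Or.inl (by rw [h, zpow_neg])⟩
      · refine ⟨-z * (2 * (n : ℤ) - 1), Or.inr ?_⟩
        rw [h, mul_inv_rev, hbi, ← zpow_neg, bswap]
  -- write b⁻¹ c b = a^u c^v
  have hbcmem : b⁻¹ * c * b ∈ ((G : Set X) * (zpowers c : Set X)) := by
    rw [hprod]; exact Set.mem_univ _
  obtain ⟨g0, hg0, z0, hz0, hgz⟩ := hbcmem
  obtain ⟨j, hj⟩ := mem_zpowers_iff.mp hz0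
  obtain ⟨u, hu | hu⟩ := struct g0 hg0
  swap
  · -- impossible case g0 = a^u * b
    exfalso
    have hucj : b⁻¹ * c * b = a ^ u * b * c ^ j := by rw [← hgz, hu, ← hj]
    have e1 : c * b = a ^ (u * (2 * (n : ℤ) - 1)) * c ^ j := by
      calc c * b = b * (b⁻¹ * c * b) := by group
        _ = b * (a ^ u * b * c ^ j) := by rw [hucj]
        _ = (b * a ^ u) * (b * c ^ j) := by group
        _ = (a ^ (u * (2 * (n : ℤ) - 1)) * b) * (b * c ^ j) := by rw [bswap]
        _ = a ^ (u * (2 * (n : ℤ) - 1)) * ((b * b) * c ^ j) := by group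
        _ = a ^ (u * (2 * (n : ℤ) - 1)) * c ^ j := by rw [hb2, one_mul]
    have e2 : b = a ^ (u * (2 * (n : ℤ) - 1) * r) * c ^ (j - 1) := by
      calc b = c⁻¹ * (c * b) := by group
        _ = c⁻¹ * (a ^ (u * (2 * (n : ℤ) - 1)) * c ^ j) := by rw [e1]
        _ = c⁻¹ * (a ^ (u * (2 * (n : ℤ) - 1)) * (c * c ^ (j - 1))) := by
            rw [← zpow_one_add, add_sub_cancel]
        _ = (c⁻¹ * a ^ (u * (2 * (n : ℤ) - 1)) * c) * c ^ (j - 1) := by group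
        _ = a ^ (u * (2 * (n : ℤ) - 1) * r) * c ^ (j - 1) := by rw [conj_ac']
    have e3 : a ^ (-(u * (2 * (n : ℤ) - 1) * r)) * b = c ^ (j - 1) := by
      rw [e2]; group
    have e4 : c ^ (j - 1) ∈ G ⊓ zpowers c := by
      constructor
      · rw [← e3]; exact mul_mem (G.zpow_mem haG _) hbG
      · exact zpow_mem (mem_zpowers c) _
    rw [hint] at e4
    have e5 : c ^ (j - 1) = 1 := by simpa using e4
    rw [e5, mul_one] at e2
    exact hbna (e2 ▸ zpow_mem (mem_zpowers a) _)
  -- now b⁻¹ c b = a^u c^j ; normalize exponent of c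
  have huv0 : b⁻¹ * c * b = a ^ u * c ^ j := by rw [← hgz, hu, ← hj]
  set v : ℕ := (j % (m : ℤ)).toNat with hvdef
  have hjv : c ^ j = c ^ (v : ℕ) := by
    have h1 : ((v : ℕ) : ℤ) = j % (m : ℤ) :=
      Int.toNat_of_nonneg (Int.emod_nonneg j (by exact_mod_cast NeZero.ne m))
    rw [← zpow_natCast, h1]
    have h2 := zpow_mod_orderOf c j
    rw [hc] at h2
    exact h2.symm
  have huv : b⁻¹ * c * b = a ^ u * c ^ (v : ℕ) := by rw [huv0, hjv]
  have hv1 : 1 ≤ v := by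
    rcases Nat.eq_zero_or_pos v with h0 | h1
    · exfalso
      rw [h0, pow_zero, mul_one] at huv
      have e : c = a ^ (u * (2 * (n : ℤ) - 1)) := by
        calc c = b * (b⁻¹ * c * b) * b⁻¹ := by group
          _ = b * a ^ u * b⁻¹ := by rw [huv]
          _ = a ^ (u * (2 * (n : ℤ) - 1)) * b * b⁻¹ := by rw [hbi, bswap]
          _ = a ^ (u * (2 * (n : ℤ) - 1)) := by rw [hbi, mul_assoc, hb2, mul_one]
      have e2 : a ^ (u * (2 * (n : ℤ) - 1)) = c ^ (1 : ℤ) := by rw [zpow_one, e]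
      have := (triv _ _ e2).2
      rw [zpow_one] at this
      have : orderOf c = 1 := by rw [this]; exact orderOf_one
      omega
    · exact h1
  -- power formula for (a^u c^v)^k
  set t : ℤ := r ^ v with htdef
  set T : ℕ → ℤ := fun k => u * ∑ i ∈ Finset.range k, t ^ (i + 1) with hTdef
  have hstep : ∀ k : ℕ, (∑ i ∈ Finset.range k, t ^ (i + 1)) * t = ∑ i ∈ Finset.range k, t ^ (i + 1 + 1) := by
    intro k
    rw [Finset.sum_mul]
    exact Finset.sum_congr rfl fun i _ => by ring
  have Tsucc : ∀ k : ℕ, (T k + u) * t = T (k + 1) := by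
    intro k
    simp only [hTdef]
    rw [Finset.sum_range_succ', add_mul, mul_assoc, hstep]
    ring
  have powf : ∀ k : ℕ, (a ^ u * c ^ (v : ℕ)) ^ k = c ^ (v * k) * a ^ (T k) := by
    intro k
    induction k with
    | zero => simp [hTdef]
    | succ k ih =>
      calc (a ^ u * c ^ (v : ℕ)) ^ (k + 1) = (a ^ u * c ^ (v : ℕ)) ^ k * (a ^ u * c ^ (v : ℕ)) := by
            rw [pow_succ]
        _ = c ^ (v * k) * a ^ (T k) * (a ^ u * c ^ (v : ℕ)) := by rw [ih]
        _ = c ^ (v * k) * (a ^ (T k + u) * c ^ (v : ℕ)) := by rw [zpow_add]; group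
        _ = c ^ (v * k) * (c ^ (v : ℕ) * a ^ ((T k + u) * r ^ v)) := by rw [conj_ac_pow]
        _ = c ^ (v * (k + 1)) * a ^ (T (k + 1)) := by
            rw [← mul_assoc, ← pow_add, Tsucc, Nat.mul_succ]
  -- κ := r mod 4n satisfies κ^v = κ
  have hκv : ((r : ZMod (4 * n))) ^ v = ((r : ZMod (4 * n))) := by
    have e1 : a * c ^ (v : ℕ) = c ^ (v : ℕ) * a ^ ((1 : ℤ) * r ^ v) := by
      simpa using conj_ac_pow v 1
    have eA : (a ^ u * c ^ (v : ℕ))⁻¹ * a * (a ^ u * c ^ (v : ℕ)) = a ^ ((1 : ℤ) * r ^ v) := by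
      calc (a ^ u * c ^ (v : ℕ))⁻¹ * a * (a ^ u * c ^ (v : ℕ))
          = (c ^ (v : ℕ))⁻¹ * ((a ^ u)⁻¹ * a * a ^ u) * c ^ (v : ℕ) := by group
        _ = (c ^ (v : ℕ))⁻¹ * (a * c ^ (v : ℕ)) := by group
        _ = (c ^ (v : ℕ))⁻¹ * (c ^ (v : ℕ) * a ^ ((1 : ℤ) * r ^ v)) := by rw [e1]
        _ = a ^ ((1 : ℤ) * r ^ v) := by group
    have eB : (a ^ u * c ^ (v : ℕ))⁻¹ * a * (a ^ u * c ^ (v : ℕ))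
        = a ^ ((2 * (n : ℤ) - 1) * r * (2 * (n : ℤ) - 1)) := by
      rw [← huv]
      have hs1 : b * a * b⁻¹ = a ^ (2 * (n : ℤ) - 1) := by
        have h := hs
        rw [hbi] at h ⊢
        exact h
      calc (b⁻¹ * c * b)⁻¹ * a * (b⁻¹ * c * b)
          = b⁻¹ * (c⁻¹ * (b * a * b⁻¹) * c) * b := by group
        _ = b⁻¹ * (c⁻¹ * a ^ (2 * (n : ℤ) - 1) * c) * b := by rw [hs1]
        _ = b⁻¹ * a ^ ((2 * (n : ℤ) - 1) * r) * b := by rw [conj_ac']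
        _ = a ^ ((2 * (n : ℤ) - 1) * r * (2 * (n : ℤ) - 1)) := conj_b _
    have e := (apow _ _).mp (eA.symm.trans eB)
    push_cast at e
    have h4 : ((4 * n : ℕ) : ZMod (4 * n)) = 0 := ZMod.natCast_self _
    push_cast at h4
    -- (2n-1)^2 = 1 in ZMod (4n)
    have hσ : (2 * (n : ZMod (4 * n)) - 1) * (2 * (n : ZMod (4 * n)) - 1) = 1 := by
      have hid : ∀ x : ZMod (4 * n), (2 * x - 1) * (2 * x - 1) = 1 + (4 * x) * (x - 1) := by
        intro x; ring
      rw [hid, h4]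
      ring
    calc (r : ZMod (4 * n)) ^ v = (2 * (n : ZMod (4 * n)) - 1) * (r : ZMod (4 * n)) *
          (2 * (n : ZMod (4 * n)) - 1) := by rw [← e]; ring
      _ = (r : ZMod (4 * n)) := by
          rw [mul_comm _ ((r : ZMod (4 * n))), mul_assoc, hσ, mul_one]
  -- the fundamental relation coming from b² = 1
  have eC : c = a ^ (u * (2 * (n : ℤ) - 1)) * ((a ^ u * c ^ (v : ℕ)) ^ (v : ℕ)) := by
    have h0 : b⁻¹ * (b⁻¹ * c * b) * b = c := by
      rw [hbi]
      calc b * (b * c * b) * b = (b * b) * c * (b * b) := by group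
        _ = c := by rw [hb2, one_mul, mul_one]
    calc c = b⁻¹ * (b⁻¹ * c * b) * b := h0.symm
      _ = b⁻¹ * (a ^ u * c ^ (v : ℕ)) * b := by rw [huv]
      _ = (b⁻¹ * a ^ u * b) * (b⁻¹ * c ^ (v : ℕ) * b) := by group
      _ = a ^ (u * (2 * (n : ℤ) - 1)) * (b⁻¹ * c * b) ^ (v : ℕ) := by rw [conj_b, conj_pow']
      _ = a ^ (u * (2 * (n : ℤ) - 1)) * (a ^ u * c ^ (v : ℕ)) ^ (v : ℕ) := by rw [huv]
  have eD : a ^ (u * (2 * (n : ℤ) - 1) * r ^ (v * v) + T v) = c ^ ((1 : ℤ) - (v * v : ℕ)) := by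
    have h1 : c = c ^ (v * v : ℕ) * a ^ (u * (2 * (n : ℤ) - 1) * r ^ (v * v) + T v) := by
      calc c = a ^ (u * (2 * (n : ℤ) - 1)) * ((a ^ u * c ^ (v : ℕ)) ^ (v : ℕ)) := eC
        _ = a ^ (u * (2 * (n : ℤ) - 1)) * (c ^ (v * v : ℕ) * a ^ (T v)) := by rw [powf]
        _ = (a ^ (u * (2 * (n : ℤ) - 1)) * c ^ (v * v : ℕ)) * a ^ (T v) := by group
        _ = (c ^ (v * v : ℕ) * a ^ (u * (2 * (n : ℤ) - 1) * r ^ (v * v))) * a ^ (T v) := by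
            rw [conj_ac_pow]
        _ = c ^ (v * v : ℕ) * a ^ (u * (2 * (n : ℤ) - 1) * r ^ (v * v) + T v) := by
            rw [zpow_add]; group
    have h2 : (c ^ (v * v : ℕ))⁻¹ * c = c ^ ((1 : ℤ) - (v * v : ℕ)) := by
      rw [← zpow_natCast c (v * v), ← zpow_neg, sub_eq_neg_add, zpow_add, zpow_one]
    rw [← h2]
    conv_lhs => rw [show a ^ (u * (2 * (n : ℤ) - 1) * r ^ (v * v) + T v)
      = (c ^ (v * v : ℕ))⁻¹ * (c ^ (v * v : ℕ) * a ^ (u * (2 * (n : ℤ) - 1) * r ^ (v * v) + T v))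
      from by group]
    rw [← h1]
  obtain ⟨hE1, -⟩ := triv _ _ eD
  -- pass to ZMod (4n)
  have κcancel : ∀ x : ZMod (4 * n), ((r : ℤ) : ZMod (4 * n)) * x = 0 → x = 0 := by
    intro x hx
    rcases hκunit with ⟨κu, hκu⟩
    rw [← hκu] at hx
    exact (Units.mul_right_eq_zero κu).mp hx
  have h4 : (4 * (n : ZMod (4 * n))) = 0 := by
    have h := ZMod.natCast_self (4 * n)
    push_cast at h
    exact h
  have hsumκ : ∀ k : ℕ, ∑ i ∈ Finset.range k, ((r : ℤ) : ZMod (4 * n)) ^ (i + 1)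
      = ((r : ℤ) : ZMod (4 * n)) * ∑ i ∈ Finset.range k, ((r : ℤ) : ZMod (4 * n)) ^ i := by
    intro k
    rw [Finset.mul_sum]
    exact Finset.sum_congr rfl fun i _ => pow_succ' _ _
  have hv' : v = (v - 1) + 1 := (Nat.sub_add_cancel hv1).symm
  have hsum3 : ∑ i ∈ Finset.range v, ((r : ℤ) : ZMod (4 * n)) ^ i
      = ((r : ℤ) : ZMod (4 * n)) * (∑ i ∈ Finset.range (v - 1), ((r : ℤ) : ZMod (4 * n)) ^ i) + 1 := by
    conv_lhs => rw [hv']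
    rw [Finset.sum_range_succ', hsumκ, pow_zero]
  have key : (u : ZMod (4 * n)) * (2 * (n : ZMod (4 * n))
      + ((r : ℤ) : ZMod (4 * n)) * (∑ i ∈ Finset.range (v - 1), ((r : ℤ) : ZMod (4 * n)) ^ i)) = 0 := by
    have h1 := (haz _).mp hE1
    simp only [hTdef, htdef] at h1
    push_cast at h1
    simp only [pow_mul, hκv, hsumκ, hsum3] at h1
    apply κcancel
    linear_combination h1
  have hdouble : 2 * ((u : ZMod (4 * n))
      * (∑ i ∈ Finset.range (v - 1), ((r : ℤ) : ZMod (4 * n)) ^ i)) = 0 := by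
    apply κcancel
    linear_combination 2 * key - (u : ZMod (4 * n)) * h4
  have κv1 : ((r : ℤ) : ZMod (4 * n)) ^ (v - 1) = 1 := by
    have h := hκv
    rw [hv', pow_succ] at h
    have h2 := κcancel (((r : ℤ) : ZMod (4 * n)) ^ (v - 1) - 1) (by linear_combination h)
    exact sub_eq_zero.mp h2
  -- core lemma: such powers of c generate a normal subgroup of ⟨c⟩, hence are trivial
  have star : ∀ k : ℕ, ((r : ℤ) : ZMod (4 * n)) ^ k = 1 →
      (u : ZMod (4 * n)) * (∑ i ∈ Finset.range k, ((r : ℤ) : ZMod (4 * n)) ^ i) = 0 →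
      c ^ k = 1 := by
    intro k hk1 hk2
    have haTk : a ^ (T k) = 1 := by
      rw [haz]
      simp only [hTdef, htdef]
      push_cast
      simp only [pow_mul, hκv, hsumκ]
      linear_combination ((r : ℤ) : ZMod (4 * n)) * hk2
    have hbk : b⁻¹ * c ^ k * b = (c ^ k) ^ (v : ℕ) := by
      calc b⁻¹ * c ^ k * b = (b⁻¹ * c * b) ^ k := conj_pow' b c k
        _ = (a ^ u * c ^ (v : ℕ)) ^ k := by rw [huv]
        _ = c ^ (v * k) * a ^ (T k) := powf k
        _ = c ^ (v * k) := by rw [haTk, mul_one]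
        _ = (c ^ k) ^ (v : ℕ) := by rw [← pow_mul, Nat.mul_comm]
    have hak : a * c ^ k = c ^ k * a := by
      have h := conj_ac_pow k 1
      have h2 : a ^ ((1 : ℤ) * r ^ k) = a ^ (1 : ℤ) := by
        rw [apow]
        push_cast
        rw [hk1, one_mul]
      rw [h2] at h
      simpa using h
    set D := zpowers (c ^ k) with hDdef
    have hbk' : b * c ^ k * b⁻¹ = (c ^ k) ^ (v : ℕ) := by rw [hbi]; rw [hbi] at hbk; exact hbk
    have normalizer_of_commute : ∀ y : X, y * c ^ k = c ^ k * y → y ∈ normalizer (D : Set X) := by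
      intro y hy
      have hcomm : ∀ h ∈ D, y * h * y⁻¹ = h := by
        intro h hh
        obtain ⟨z, hz⟩ := mem_zpowers_iff.mp hh
        have hyc : Commute y (c ^ k) := hy
        have hcom : Commute y h := hz ▸ Commute.zpow_right hyc z
        rw [show y * h = h * y from hcom, mul_inv_cancel_right]
      rw [mem_normalizer_iff]
      intro h
      constructor
      · intro hh; rw [hcomm h hh]; exact hh
      · intro hh
        have h3 := hcomm _ hh
        have h4 : h = y * h * y⁻¹ := by
          calc h = y⁻¹ * (y * h * y⁻¹) * y := by group
            _ = y⁻¹ * (y * (y * h * y⁻¹) * y⁻¹) * y := by rw [h3]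
            _ = y * h * y⁻¹ := by group
        rw [h4]; exact hh
    have hcN : c ∈ normalizer (D : Set X) := normalizer_of_commute c (by
      rw [← pow_succ']; exact pow_succ c k)
    have haN : a ∈ normalizer (D : Set X) := normalizer_of_commute a hak
    have hbN : b ∈ normalizer (D : Set X) := by
      have hfwd : ∀ h ∈ D, b * h * b⁻¹ ∈ D := by
        intro h hh
        obtain ⟨z, hz⟩ := mem_zpowers_iff.mp hh
        have he : b * h * b⁻¹ = ((c ^ k) ^ (v : ℕ)) ^ z := by
          calc b * h * b⁻¹ = b * (c ^ k) ^ z * b⁻¹ := by rw [hz]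
            _ = (b * c ^ k * b⁻¹) ^ z := conj_zpow.symm
            _ = ((c ^ k) ^ (v : ℕ)) ^ z := by rw [hbk']
        rw [he]
        exact zpow_mem (pow_mem (mem_zpowers _) _) _
      rw [mem_normalizer_iff]
      intro h
      constructor
      · exact fun hh => hfwd h hh
      · intro hh
        have h4 : b * (b * h * b⁻¹) * b⁻¹ = h := by
          rw [hbi]
          calc b * (b * h * b) * b = (b * b) * h * (b * b) := by group
            _ = h := by rw [hb2, one_mul, mul_one]
        have := hfwd _ hh
        rwa [h4] at this
    have hDnorm : normalizer (D : Set X) = ⊤ := by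
      rw [eq_top_iff]
      intro x _
      have hxmem : x ∈ (G : Set X) * (zpowers c : Set X) := by
        rw [hprod]; exact Set.mem_univ x
      obtain ⟨g, hg, z, hz, rfl⟩ := hxmem
      have hGN : G ≤ normalizer (D : Set X) := (closure_le _).mpr (by
        intro x hx
        simp only [Set.mem_insert_iff, Set.mem_singleton_iff] at hx
        rcases hx with rfl | rfl
        · exact haN
        · exact hbN)
      refine mul_mem (hGN hg) ?_
      obtain ⟨j2, hj2⟩ := mem_zpowers_iff.mp (SetLike.mem_coe.mp hz)
      rw [← hj2]
      exact zpow_mem hcN j2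
    haveI hDn : D.Normal := normalizer_eq_top_iff.mp hDnorm
    have hDle : D ≤ zpowers c := zpowers_le.mpr ⟨(k : ℤ), zpow_natCast c k⟩
    have hbot : D ≤ ⊥ := by
      have h := normal_le_normalCore.mpr hDle
      rwa [hcore] at h
    have h := hbot (mem_zpowers (c ^ k))
    simpa using h
  -- normalizer criterion
  have conj_norm : ∀ x : X, x⁻¹ * a * x ∈ G → x⁻¹ * b * x ∈ G → x ∈ normalizer (G : Set X) := by
    intro x hax hbx
    have hmap : G.map (MulAut.conj x⁻¹).toMonoidHom = G := by
      apply Subgroup.eq_of_le_of_card_ge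
      · rw [hGdef, MonoidHom.map_closure]
        apply (closure_le _).mpr
        rw [Set.image_insert_eq, Set.image_singleton]
        intro y hy
        simp only [Set.mem_insert_iff, Set.mem_singleton_iff] at hy
        rcases hy with rfl | rfl
        · simpa [MulAut.conj_apply] using hax
        · simpa [MulAut.conj_apply] using hbx
      · exact (Nat.card_congr
          (Subgroup.equivMapOfInjective G _ ((MulAut.conj x⁻¹).injective)).toEquiv).le
    rw [mem_normalizer_iff'']
    intro h
    constructor
    · intro hh
      have h2 : (MulAut.conj x⁻¹).toMonoidHom h ∈ G.map (MulAut.conj x⁻¹).toMonoidHom :=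
        Subgroup.mem_map_of_mem _ hh
      rw [hmap] at h2
      simpa [MulAut.conj_apply] using h2
    · intro hh
      have h2 : x⁻¹ * h * x ∈ G.map (MulAut.conj x⁻¹).toMonoidHom := by
        rw [hmap]; exact hh
      obtain ⟨g, hgmem, hgeq⟩ := h2
      have h3 : x⁻¹ * g * x = x⁻¹ * h * x := by
        simpa [MulAut.conj_apply] using hgeq
      have h4 : g = h := mul_left_cancel (mul_right_cancel h3)
      rwa [← h4]
  -- the two key conjugation formulas
  have hbc1 : b * c = a ^ u * c ^ (v : ℕ) * b := by
    have h0 := huv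
    rw [hbi] at h0
    apply mul_right_cancel (b := b)
    rw [mul_assoc (a ^ u * c ^ (v : ℕ)), hb2, mul_one]
    exact h0
  have hvsplit : c ^ (v : ℕ) = c * c ^ (v - 1) := by
    conv_lhs => rw [hv']
    rw [pow_succ']
  have hbc : c⁻¹ * b * c = a ^ (u * r) * (c ^ (v - 1) * b) := by
    calc c⁻¹ * b * c = c⁻¹ * (b * c) := by rw [mul_assoc]
      _ = c⁻¹ * (a ^ u * (c * c ^ (v - 1)) * b) := by rw [hbc1, hvsplit]
      _ = (c⁻¹ * a ^ u * c) * (c ^ (v - 1) * b) := by group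
      _ = a ^ (u * r) * (c ^ (v - 1) * b) := by rw [conj_ac']
  have hbcc : (c ^ 2)⁻¹ * b * c ^ 2
      = a ^ ((u * r + u * r₂ ^ (v - 1)) * r) * (c ^ (2 * (v - 1)) * b) := by
    have hcc : c ^ (v - 1) * c ^ (v : ℕ) = c * c ^ (2 * (v - 1)) := by
      rw [← pow_add, ← pow_succ']
      congr 1
      omega
    calc (c ^ 2)⁻¹ * b * c ^ 2 = c⁻¹ * (c⁻¹ * b * c) * c := by
            rw [pow_two, mul_inv_rev]
            group
      _ = c⁻¹ * (a ^ (u * r) * (c ^ (v - 1) * b)) * c := by rw [hbc]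
      _ = c⁻¹ * (a ^ (u * r) * (c ^ (v - 1) * (b * c))) := by group
      _ = c⁻¹ * (a ^ (u * r) * (c ^ (v - 1) * (a ^ u * c ^ (v : ℕ) * b))) := by rw [hbc1]
      _ = c⁻¹ * (a ^ (u * r) * ((c ^ (v - 1) * a ^ u) * (c ^ (v : ℕ) * b))) := by group
      _ = c⁻¹ * (a ^ (u * r) * ((a ^ (u * r₂ ^ (v - 1)) * c ^ (v - 1)) * (c ^ (v : ℕ) * b))) := by
          rw [conj_ca_pow]
      _ = c⁻¹ * (a ^ (u * r) * a ^ (u * r₂ ^ (v - 1))) * ((c ^ (v - 1) * c ^ (v : ℕ)) * b) := by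
          group
      _ = c⁻¹ * a ^ (u * r + u * r₂ ^ (v - 1)) * ((c * c ^ (2 * (v - 1))) * b) := by
          rw [← zpow_add, hcc]
      _ = (c⁻¹ * a ^ (u * r + u * r₂ ^ (v - 1)) * c) * (c ^ (2 * (v - 1)) * b) := by group
      _ = a ^ ((u * r + u * r₂ ^ (v - 1)) * r) * (c ^ (2 * (v - 1)) * b) := by rw [conj_ac']
  -- part 1
  have h2v : c ^ (2 * (v - 1)) = 1 := by
    apply star
    · rw [two_mul, pow_add, κv1, one_mul]
    · rw [two_mul, Finset.sum_range_add]
      rw [Finset.sum_congr rfl (fun i _ => by rw [pow_add, κv1, one_mul] :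
        ∀ i ∈ Finset.range (v - 1), ((r : ℤ) : ZMod (4 * n)) ^ ((v - 1) + i)
          = ((r : ℤ) : ZMod (4 * n)) ^ i)]
      linear_combination hdouble
  have part1 : c ^ 2 ∈ normalizer (G : Set X) := by
    apply conj_norm
    · have h0 : (c ^ 2)⁻¹ * a * c ^ 2 = a ^ (r * r) := by
        calc (c ^ 2)⁻¹ * a * c ^ 2 = c⁻¹ * (c⁻¹ * a * c) * c := by
                rw [pow_two, mul_inv_rev]
                group
          _ = c⁻¹ * a ^ r * c := by rw [← hr]
          _ = a ^ (r * r) := conj_ac' r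
      rw [h0]
      exact G.zpow_mem haG _
    · rw [hbcc, h2v, one_mul]
      exact mul_mem (G.zpow_mem haG _) hbG
  refine ⟨part1, ?_⟩
  -- part 2
  intro M₂ hM₂ hbM₂
  have hcM₂ : c ∈ M₂ := by
    have h0 : c ∈ (M₂ : Set X) := by
      rw [hM₂]
      exact ⟨1, SetLike.mem_coe.mpr (one_mem _), c, SetLike.mem_coe.mpr (mem_zpowers c), one_mul c⟩
    exact h0
  have hbcbM : b⁻¹ * c * b ∈ (M₂ : Set X) := by
    have h := (mem_normalizer_iff.mp hbM₂ c).mp hcM₂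
    rw [hbi] at h
    have h2 : b⁻¹ * c * b ∈ M₂ := by rw [hbi]; exact h
    exact h2
  rw [hM₂] at hbcbM
  obtain ⟨x, hx, y, hy, hxy⟩ := hbcbM
  obtain ⟨i, hi⟩ := mem_zpowers_iff.mp (SetLike.mem_coe.mp hx)
  obtain ⟨j2, hj2⟩ := mem_zpowers_iff.mp (SetLike.mem_coe.mp hy)
  have hx2 : x = a ^ (2 * i) := by
    rw [← hi, ← zpow_natCast a 2, ← zpow_mul]
    norm_num
  have e : a ^ (u - 2 * i) = c ^ (j2 - (v : ℕ)) := by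
    have h0 : a ^ (2 * i) * c ^ j2 = a ^ u * c ^ (v : ℕ) := by
      rw [← hx2, hj2]
      exact hxy.trans huv
    calc a ^ (u - 2 * i)
        = (a ^ (2 * i))⁻¹ * (a ^ u * c ^ (v : ℕ)) * (c ^ (v : ℕ))⁻¹ := by
          rw [zpow_sub]
          group
      _ = (a ^ (2 * i))⁻¹ * (a ^ (2 * i) * c ^ j2) * (c ^ (v : ℕ))⁻¹ := by rw [h0]
      _ = c ^ j2 * (c ^ (v : ℕ))⁻¹ := by group
      _ = c ^ (j2 - (v : ℕ)) := by rw [← zpow_natCast c v, ← zpow_sub]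
  obtain ⟨hea, -⟩ := triv _ _ e
  have hu2 : 2 * (n : ZMod (4 * n)) * (u : ZMod (4 * n)) = 0 := by
    have h1 := (haz _).mp hea
    push_cast at h1
    linear_combination 2 * (n : ZMod (4 * n)) * h1 + (i : ZMod (4 * n)) * h4
  have huH : (u : ZMod (4 * n))
      * (∑ i ∈ Finset.range (v - 1), ((r : ℤ) : ZMod (4 * n)) ^ i) = 0 := by
    apply κcancel
    linear_combination key - hu2
  have hv1' : c ^ (v - 1) = 1 := star (v - 1) κv1 huH
  have hcNorm : c ∈ normalizer (G : Set X) := by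
    apply conj_norm
    · rw [← hr]
      exact G.zpow_mem haG r
    · rw [hbc, hv1', one_mul]
      exact mul_mem (G.zpow_mem haG _) hbG
  rw [← normalizer_eq_top_iff, eq_top_iff]
  intro x _
  have hxmem : x ∈ (G : Set X) * (zpowers c : Set X) := by
    rw [hprod]; exact Set.mem_univ x
  obtain ⟨g, hg, z, hz, rfl⟩ := hxmem
  refine mul_mem (le_normalizer hg) ?_
  obtain ⟨j3, hj3⟩ := mem_zpowers_iff.mp (SetLike.mem_coe.mp hz)
  rw [← hj3]
  exact zpow_mem hcNorm j3
end

section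
/- Let X = G⟨c⟩ with G ≅ SD_{8n}, ⟨c⟩ cyclic, G ∩ ⟨c⟩ = 1, and let ⟨c⟩_X denote the core of ⟨c⟩ in X. If n is odd, then ⟨a⁴, c⟩ ≤ C_X(⟨c⟩_X) and [X : C_X(⟨c⟩_X)] ≤ 8; if n is even, then ⟨a², c⟩ ≤ C_X(⟨c⟩_X) and [X : C_X(⟨c⟩_X)] ≤ 4. -/
open Pointwise Subgroup
open scoped commutatorElement

lemma aux_mul_inj {X : Type*} [Group X] (A B : Subgroup X) (h : A ⊓ B = ⊥) :
    Function.Injective (fun p : A × B => (p.1 : X) * (p.2 : X)) := by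
  rintro ⟨⟨x1, hx1⟩, ⟨y1, hy1⟩⟩ ⟨⟨x2, hx2⟩, ⟨y2, hy2⟩⟩ heq
  simp only at heq
  have key : x2⁻¹ * x1 = y2 * y1⁻¹ := by
    have : x2 * (x2⁻¹ * x1) * y1 = x2 * (y2 * y1⁻¹) * y1 := by
      group
      rw [heq]
    exact mul_left_cancel (mul_right_cancel this)
  have hmem : x2⁻¹ * x1 ∈ A ⊓ B := by
    rw [Subgroup.mem_inf]
    exact ⟨mul_mem (inv_mem hx2) hx1, key ▸ mul_mem hy2 (inv_mem hy1)⟩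
  rw [h, Subgroup.mem_bot, inv_mul_eq_one] at hmem
  have hy : y1 = y2 := mul_left_cancel (hmem ▸ heq)
  subst hmem; subst hy; rfl

lemma aux_conj_zpow {X : Type*} [Group X] (u z : X) (p : ℤ) (hu : u * z * u⁻¹ = z ^ p) (j : ℤ) :
    u * z ^ j * u⁻¹ = z ^ (p * j) := by
  rw [← conj_zpow, hu, ← zpow_mul]

lemma aux_comm_centralizes {X : Type*} [Group X] (N : Subgroup X) (hN : N.Normal) (z : X)
    (hzN : z ∈ N) (hgen : ∀ x ∈ N, ∃ k : ℤ, x = z ^ k) (g h : X) :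
    ⁅g, h⁆ ∈ Subgroup.centralizer (N : Set X) := by
  rw [Subgroup.mem_centralizer_iff]
  intro x hx
  obtain ⟨k, rfl⟩ := hgen x hx
  obtain ⟨p, hp⟩ := hgen _ (hN.conj_mem z hzN g)
  obtain ⟨q, hq⟩ := hgen _ (hN.conj_mem z hzN h)
  obtain ⟨p', hp'⟩ := hgen _ (hN.conj_mem z hzN g⁻¹)
  obtain ⟨q', hq'⟩ := hgen _ (hN.conj_mem z hzN h⁻¹)
  rw [inv_inv] at hp' hq'
  have Hp := aux_conj_zpow g z p hp
  have Hq := aux_conj_zpow h z q hq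
  have Hp' : ∀ j : ℤ, g⁻¹ * z ^ j * g = z ^ (p' * j) := by
    intro j; have := aux_conj_zpow g⁻¹ z p' (by rw [inv_inv]; exact hp') j
    rwa [inv_inv] at this
  have Hq' : ∀ j : ℤ, h⁻¹ * z ^ j * h = z ^ (q' * j) := by
    intro j; have := aux_conj_zpow h⁻¹ z q' (by rw [inv_inv]; exact hq') j
    rwa [inv_inv] at this
  have hpp' : z ^ (p * p') = z := by
    have := Hp p'
    rw [← hp', ← mul_assoc] at this
    rw [← this]; group
  have hqq' : z ^ (q * q') = z := by
    have := Hq q'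
    rw [← hq', ← mul_assoc] at this
    rw [← this]; group
  have main : ⁅g, h⁆ * z ^ k * ⁅g, h⁆⁻¹ = z ^ k := by
    have e1 : ⁅g, h⁆ * z ^ k * ⁅g, h⁆⁻¹
        = g * (h * (g⁻¹ * (h⁻¹ * z ^ k * h) * g) * h⁻¹) * g⁻¹ := by
      rw [commutatorElement_def]; group
    rw [e1, Hq' k, Hp' (q' * k), Hq (p' * (q' * k)), Hp (q * (p' * (q' * k)))]
    have : p * (q * (p' * (q' * k))) = (p * p') * ((q * q') * k) := by ring
    rw [this, zpow_mul, hpp', zpow_mul, hqq']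
  calc z ^ k * ⁅g, h⁆ = (⁅g, h⁆ * z ^ k * ⁅g, h⁆⁻¹) * ⁅g, h⁆ := by rw [main]
    _ = ⁅g, h⁆ * z ^ k := by group

lemma aux_exists_gen {X : Type*} [Group X] (c : X) (N : Subgroup X) (hle : N ≤ zpowers c) :
    ∃ z : X, z ∈ N ∧ ∀ x ∈ N, ∃ k : ℤ, x = z ^ k := by
  have hcyc : IsCyclic (zpowers c) := by
    refine ⟨⟨⟨c, mem_zpowers c⟩, fun x => ?_⟩⟩
    obtain ⟨k, hk⟩ := x.2
    exact ⟨k, by ext; simpa using hk⟩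
  have : IsCyclic (N.subgroupOf (zpowers c)) := Subgroup.isCyclic _
  have hNcyc : IsCyclic N :=
    isCyclic_of_surjective _ (Subgroup.subgroupOfEquivOfLe hle).surjective
  obtain ⟨g, hg⟩ := hNcyc.exists_generator
  refine ⟨(g : X), g.2, fun x hx => ?_⟩
  obtain ⟨k, hk⟩ := hg ⟨x, hx⟩
  exact ⟨k, by have := congrArg Subtype.val hk; simpa using this.symm⟩

lemma aux_card_le {X : Type*} [Group X] [Finite X] (u v : X) (H : Subgroup X)
    (hu : u ∈ H) (hv : v ∈ H) (hdisj : zpowers u ⊓ zpowers v = ⊥) :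
    orderOf u * orderOf v ≤ Nat.card H := by
  have hle1 : zpowers u ≤ H := zpowers_le.mpr hu
  have hle2 : zpowers v ≤ H := zpowers_le.mpr hv
  let f : (zpowers u) × (zpowers v) → H := fun p => ⟨(p.1 : X) * (p.2 : X),
    mul_mem (hle1 p.1.2) (hle2 p.2.2)⟩
  have hinj : Function.Injective f := by
    intro p q hpq
    exact aux_mul_inj _ _ hdisj (by simpa [f, Subtype.ext_iff] using hpq)
  calc orderOf u * orderOf v = Nat.card ((zpowers u) × (zpowers v)) := by
        rw [Nat.card_prod, Nat.card_zpowers, Nat.card_zpowers]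
    _ ≤ Nat.card H := Nat.card_le_card_of_injective f hinj

theorem stmt15 {X : Type*} [Group X] [Finite X] (n m : ℕ) (hn : 2 ≤ n) (hm : 2 ≤ m)
    (a b c : X)
    (ha : orderOf a = 4 * n) (hb : orderOf b = 2)
    (hab : b⁻¹ * a * b = a ^ (2 * n - 1))
    (hG : Nat.card (closure ({a, b} : Set X)) = 8 * n)
    (hc : orderOf c = m)
    (hprod : (closure ({a, b} : Set X) : Set X) * (zpowers c : Set X) = Set.univ)
    (hint : closure ({a, b} : Set X) ⊓ zpowers c = ⊥) :
    (Odd n →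
      closure ({a ^ 4, c} : Set X) ≤
        Subgroup.centralizer (((zpowers c).normalCore : Subgroup X) : Set X) ∧
      (Subgroup.centralizer (((zpowers c).normalCore : Subgroup X) : Set X)).index ≤ 8) ∧
    (Even n →
      closure ({a ^ 2, c} : Set X) ≤
        Subgroup.centralizer (((zpowers c).normalCore : Subgroup X) : Set X) ∧
      (Subgroup.centralizer (((zpowers c).normalCore : Subgroup X) : Set X)).index ≤ 4) := by
  set G : Subgroup X := closure ({a, b} : Set X) with hGdef
  set N : Subgroup X := (zpowers c).normalCore with hNdef
  set C : Subgroup X := Subgroup.centralizer (N : Set X) with hCdef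
  have haG : a ∈ G := subset_closure (by simp)
  -- c centralizes N
  have hcC : c ∈ C := by
    rw [hCdef, Subgroup.mem_centralizer_iff]
    intro x hx
    obtain ⟨k, hk⟩ := (zpowers c).normalCore_le hx
    simp only [← hk]
    exact Commute.zpow_left (Commute.refl c) k
  -- commutators centralize N
  have hcommC : ∀ g h : X, ⁅g, h⁆ ∈ C := by
    obtain ⟨z, hzN, hgen⟩ := aux_exists_gen c N ((zpowers c).normalCore_le)
    intro g h
    exact aux_comm_centralizes N (Subgroup.normalCore_normal _) z hzN hgen g h
  -- a^(2n-2) is a commutator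
  have hE : a ^ (2 * n - 2) ∈ C := by
    have hcb : ⁅b⁻¹, a⁆ = a ^ (2 * n - 2) := by
      rw [commutatorElement_def, inv_inv, hab,
        show 2 * n - 1 = (2 * n - 2) + 1 from by omega, pow_succ, mul_assoc]
      simp
    exact hcb ▸ hcommC b⁻¹ a
  have ha4n : a ^ (4 * n) = 1 := ha ▸ pow_orderOf_eq_one a
  -- a^4 ∈ C (always)
  have ha4 : a ^ 4 ∈ C := by
    have key : (a ^ (2 * n - 2) : X) ^ ((-2 : ℤ)) = a ^ 4 := by
      rw [← zpow_natCast a (2 * n - 2), ← zpow_mul]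
      have he : ((2 * n - 2 : ℕ) : ℤ) * (-2) = ((4 : ℕ) : ℤ) - ((4 * n : ℕ) : ℤ) := by omega
      rw [he, zpow_sub, zpow_natCast a 4, zpow_natCast a (4 * n), ha4n]
      simp
    exact key ▸ zpow_mem hE (-2 : ℤ)
  -- a^2 ∈ C when n even
  have ha2 : Even n → a ^ 2 ∈ C := by
    rintro ⟨t, rfl⟩
    have key : (a ^ (2 * (t + t) - 2) : X) ^ (-(((t + t) : ℤ) + 1)) = a ^ 2 := by
      rw [← zpow_natCast a (2 * (t + t) - 2), ← zpow_mul]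
      have he : ((2 * (t + t) - 2 : ℕ) : ℤ) * (-(((t + t) : ℤ) + 1))
          = ((2 : ℕ) : ℤ) - ((4 * (t + t) : ℕ) : ℤ) * (t : ℤ) := by
        have h1 : ((2 * (t + t) - 2 : ℕ) : ℤ) = 2 * ((t : ℤ) + t) - 2 := by omega
        have h2 : ((4 * (t + t) : ℕ) : ℤ) = 4 * ((t : ℤ) + t) := by omega
        rw [h1, h2]; ring
      rw [he, zpow_sub, zpow_natCast a 2, zpow_mul, zpow_natCast a (4 * (t + t)), ha4n]
      simp
    exact key ▸ zpow_mem hE _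
  -- cardinality of X
  have cardX : Nat.card X = 8 * n * m := by
    have hbij : Function.Bijective (fun p : G × (zpowers c) => (p.1 : X) * (p.2 : X)) := by
      refine ⟨aux_mul_inj _ _ hint, fun x => ?_⟩
      have hx : x ∈ ((G : Set X) * (zpowers c : Set X)) := by rw [hprod]; trivial
      obtain ⟨g, hg, y, hy, rfl⟩ := hx
      exact ⟨(⟨g, hg⟩, ⟨y, hy⟩), rfl⟩
    rw [← Nat.card_eq_of_bijective _ hbij, Nat.card_prod, hG, Nat.card_zpowers, hc]
  -- main branch lemma
  have branch : ∀ j r : ℕ, a ^ j ∈ C → orderOf (a ^ j) * m * r = 8 * n * m →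
      closure ({a ^ j, c} : Set X) ≤ C ∧ C.index ≤ r := by
    intro j r hj hr
    set H : Subgroup X := closure ({a ^ j, c} : Set X) with hHdef
    have hHC : H ≤ C := by
      rw [hHdef, closure_le]
      rintro x (rfl | rfl)
      · exact hj
      · exact hcC
    have hjH : a ^ j ∈ H := subset_closure (by simp)
    have hcH : c ∈ H := subset_closure (by simp)
    have hdisj : zpowers (a ^ j) ⊓ zpowers c = ⊥ := by
      rw [← le_bot_iff, ← hint]
      exact inf_le_inf_right _ (zpowers_le.mpr (pow_mem haG j))
    have hcard : orderOf (a ^ j) * m ≤ Nat.card H := by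
      have := aux_card_le (a ^ j) c H hjH hcH hdisj
      rwa [hc] at this
    have hidxH : H.index ≤ r := by
      have hmul : Nat.card H * H.index = 8 * n * m := by
        rw [Subgroup.card_mul_index, cardX]
      have hpos : 0 < orderOf (a ^ j) * m :=
        Nat.mul_pos (orderOf_pos _) (by omega)
      have h1 : (orderOf (a ^ j) * m) * H.index ≤ (orderOf (a ^ j) * m) * r := by
        calc (orderOf (a ^ j) * m) * H.index ≤ Nat.card H * H.index :=
              Nat.mul_le_mul_right _ hcard
          _ = 8 * n * m := hmul
          _ = (orderOf (a ^ j) * m) * r := hr.symm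
      exact Nat.le_of_mul_le_mul_left h1 hpos
    refine ⟨hHC, le_trans ?_ hidxH⟩
    exact Nat.le_of_dvd (Nat.pos_of_ne_zero H.index_ne_zero_of_finite)
      (Subgroup.index_dvd_of_le hHC)
  have hord4 : orderOf (a ^ 4) = n := by
    rw [orderOf_pow, ha, Nat.gcd_comm, Nat.gcd_eq_left ⟨n, rfl⟩, Nat.mul_div_cancel_left _ (by norm_num)]
  have hord2 : orderOf (a ^ 2) = 2 * n := by
    rw [orderOf_pow, ha, Nat.gcd_comm, Nat.gcd_eq_left ⟨2 * n, by ring⟩]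
    omega
  constructor
  · intro _
    exact branch 4 8 ha4 (by rw [hord4]; ring)
  · intro hev
    exact branch 2 4 (ha2 hev) (by rw [hord2]; ring)
end

section
/- Let X be a finite permutation group containing a regular subgroup isomorphic to SD_{8n} with n ≥ 3. If some (equivalently every) point stabilizer in X is cyclic and nontrivial, then X is imprimitive. -/
theorem stmt19 {X Ω : Type*} [Group X] [Finite X] [MulAction X Ω]
    (hfaith : ∀ g : X, (∀ ω : Ω, g • ω = ω) → g = 1)
    (htrans : MulAction.IsPretransitive X Ω)
    (n : ℕ) (hn : 3 ≤ n) (G : Subgroup X) (hSD : IsSemidihedral n G)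
    (hreg : ∀ α β : Ω, ∃! g : G, (g : X) • α = β)
    (hstab : ∀ α : Ω, IsCyclic (MulAction.stabilizer X α) ∧ MulAction.stabilizer X α ≠ ⊥) :
    ∃ B : Set Ω, MulAction.IsBlock X B ∧ B.Nontrivial ∧ B ≠ Set.univ := by
  classical
  obtain ⟨hcard, a, b, ha4, hb2, hrel, hgen⟩ := hSD
  -- basic elements
  have hane : a ≠ 1 := by
    intro h; rw [h, orderOf_one] at ha4; omega
  have haneX : (a : X) ≠ 1 := by
    simpa [ne_eq, OneMemClass.coe_eq_one] using hane
  -- Ω is nonempty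
  haveI hΩne : Nonempty Ω := by
    by_contra h
    rw [not_nonempty_iff] at h
    exact haneX (hfaith _ (fun ω => h.elim ω))
  obtain ⟨α⟩ := hΩne
  by_contra hB
  push_neg at hB
  -- hB : ∀ B, IsBlock X B → B.Nontrivial → B = univ
  have hB : ∀ B : Set Ω, MulAction.IsBlock X B → B.Nontrivial → B = Set.univ := by
    intro B h1 h2
    by_contra h3
    exact h3 (hB B h1 h2)
  set H := MulAction.stabilizer X α with hHdef
  -- semiregularity of G
  have hsemireg : ∀ (g : G) (ω : Ω), (g : X) • ω = ω → g = 1 := by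
    intro g ω hg
    obtain ⟨g', -, huniq⟩ := hreg ω ω
    have h1 := huniq g hg
    have h2 := huniq 1 (by simp)
    rw [h1, h2]
  -- maximality of H
  have hmax : ∀ T : Subgroup X, H < T → T = ⊤ := by
    intro T hT
    have hblock : MulAction.IsBlock X (MulAction.orbit T α) :=
      MulAction.IsBlock.of_orbit hT.le
    obtain ⟨t, htT, htH⟩ := SetLike.exists_of_lt hT
    have hnt : (MulAction.orbit T α).Nontrivial := by
      refine ⟨t • α, MulAction.mem_orbit α (⟨t, htT⟩ : T), α, MulAction.mem_orbit_self α, ?_⟩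
      intro h
      exact htH h
    have huniv := hB _ hblock hnt
    ext x
    simp only [Subgroup.mem_top, iff_true]
    have : x • α ∈ MulAction.orbit T α := by rw [huniv]; trivial
    obtain ⟨⟨t', ht'⟩, h⟩ := this
    have hmem : t'⁻¹ * x ∈ H := by
      rw [hHdef, MulAction.mem_stabilizer_iff, mul_smul]
      simp only [Subgroup.mk_smul] at h
      rw [← h, inv_smul_smul]
    have : t'⁻¹ * x ∈ T := hT.le hmem
    simpa using mul_mem ht' this
  -- normal subgroups inside H are trivial
  have hker : ∀ K : Subgroup X, K.Normal → K ≤ H → K = ⊥ := by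
    intro K hKn hKH
    rw [eq_bot_iff]
    intro u hu
    rw [Subgroup.mem_bot]
    apply hfaith
    intro ω
    obtain ⟨c, rfl⟩ := htrans.exists_smul_eq α ω
    have h1 : c⁻¹ * u * c ∈ K := hKn.conj_mem' u hu c
    have h2 : (c⁻¹ * u * c) • α = α := hKH h1
    have := congrArg (c • ·) h2
    simpa [mul_smul] using this
  -- H is nontrivial
  have hHne : H ≠ ⊥ := (hstab α).2
  -- elements of conjugates of stabilizers commute
  have hcommH : ∀ ω : Ω, ∀ p q : X,
      p ∈ MulAction.stabilizer X ω → q ∈ MulAction.stabilizer X ω → p * q = q * p := by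
    intro ω p q hp hq
    letI := (hstab ω).1
    letI : CommGroup (MulAction.stabilizer X ω) := IsCyclic.commGroup
    have := mul_comm (⟨p, hp⟩ : MulAction.stabilizer X ω) ⟨q, hq⟩
    exact congrArg Subtype.val this
  -- a nonidentity element fixes at most one point
  have hfix1 : ∀ y : X, y ≠ 1 → ∀ ω ω' : Ω, y • ω = ω → y • ω' = ω' → ω = ω' := by
    intro y hy ω ω' hω hω'
    by_contra hne
    obtain ⟨g, rfl⟩ := htrans.exists_smul_eq α ω
    obtain ⟨k, rfl⟩ := htrans.exists_smul_eq α ω'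
    set x := g⁻¹ * k with hxdef
    have hxH : x ∉ H := by
      intro hx
      apply hne
      have : x • α = α := hx
      have := congrArg (g • ·) this
      simpa [hxdef, mul_smul] using this.symm
    set Hx := H.map (MulAut.conj x).toMonoidHom with hHxdef
    set K := H ⊓ Hx with hKdef
    -- H and Hx normalize K
    have hHN : H ≤ Subgroup.normalizer (K : Set X) := by
      intro h hh
      apply Subgroup.mem_normalizer_fintype
      intro u hu
      have huH : u ∈ H := hu.1
      have : h * u * h⁻¹ = u := by
        rw [hcommH α h u hh huH]; group
      rw [this]; exact hu
    have hHxN : Hx ≤ Subgroup.normalizer (K : Set X) := by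
      intro h hh
      apply Subgroup.mem_normalizer_fintype
      intro u hu
      have huHx : u ∈ Hx := hu.2
      obtain ⟨p, hp, rfl⟩ := hh
      obtain ⟨q, hq, rfl⟩ := huHx
      simp only [MulEquiv.coe_toMonoidHom, MulAut.conj_apply] at *
      have hpq : p * q = q * p := hcommH α p q hp hq
      have hcomm2 : (x*p*x⁻¹) * (x*q*x⁻¹) = (x*q*x⁻¹) * (x*p*x⁻¹) := by
        have e1 : (x*p*x⁻¹) * (x*q*x⁻¹) = x * (p*q) * x⁻¹ := by group
        have e2 : (x*q*x⁻¹) * (x*p*x⁻¹) = x * (q*p) * x⁻¹ := by group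
        rw [e1, e2, hpq]
      have heq : x * p * x⁻¹ * (x * q * x⁻¹) * (x * p * x⁻¹)⁻¹ = x * q * x⁻¹ := by
        rw [hcomm2]; group
      rw [heq]; exact hu
    -- K = ⊥
    have hKbot : K = ⊥ := by
      rcases hHN.lt_or_eq with hlt | heq
      · have : Subgroup.normalizer (K : Set X) = ⊤ := hmax _ hlt
        have hKnormal : K.Normal := Subgroup.normalizer_eq_top_iff.mp this
        exact hker K hKnormal inf_le_left
      · -- K.normalizer = H, so Hx ≤ H, so x normalizes H
        exfalso
        have hHxle : Hx ≤ H := heq ▸ hHxN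
        have hxn : x ∈ Subgroup.normalizer (H : Set X) := by
          apply Subgroup.mem_normalizer_fintype
          intro u hu
          exact hHxle ⟨u, hu, rfl⟩
        rcases (Subgroup.le_normalizer (H := H)).lt_or_eq with hlt2 | heq2
        · have : Subgroup.normalizer (H : Set X) = ⊤ := hmax _ hlt2
          have : H.Normal := Subgroup.normalizer_eq_top_iff.mp this
          exact hHne (hker H this le_rfl)
        · exact hxH (heq2 ▸ hxn)
    -- now y lies in K
    have h1 : g⁻¹ * y * g ∈ H := by
      rw [hHdef, MulAction.mem_stabilizer_iff]
      have := congrArg (g⁻¹ • ·) hω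
      simpa [mul_smul] using this
    have h2 : k⁻¹ * y * k ∈ H := by
      rw [hHdef, MulAction.mem_stabilizer_iff]
      have := congrArg (k⁻¹ • ·) hω'
      simpa [mul_smul] using this
    have h3 : g⁻¹ * y * g ∈ Hx := by
      refine ⟨k⁻¹ * y * k, h2, ?_⟩
      simp only [MulEquiv.coe_toMonoidHom, MulAut.conj_apply, hxdef]
      group
    have : g⁻¹ * y * g ∈ K := ⟨h1, h3⟩
    rw [hKbot, Subgroup.mem_bot] at this
    apply hy
    have := congrArg (fun w => g * w * g⁻¹) this
    simpa [mul_assoc] using this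
  -- Fintype setup
  haveI : Fintype X := Fintype.ofFinite X
  haveI : Finite Ω := Finite.of_surjective (fun x : X => x • α)
    (fun ω => (htrans.exists_smul_eq α ω).imp (fun c hc => hc))
  haveI : Fintype Ω := Fintype.ofFinite Ω
  set m := Fintype.card H with hm
  have hmpos : 0 < m := Fintype.card_pos
  -- all stabilizers have cardinality m
  have hstabcard : ∀ ω : Ω, Fintype.card (MulAction.stabilizer X ω) = m := by
    intro ω
    obtain ⟨c, rfl⟩ := htrans.exists_smul_eq α ω
    rw [hm, ← Nat.card_eq_fintype_card, ← Nat.card_eq_fintype_card,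
      MulAction.stabilizer_smul_eq_stabilizer_map_conj]
    exact (Nat.card_congr
      (Subgroup.equivMapOfInjective H _ (MulAut.conj c).injective).toEquiv).symm
  -- the finset of nonidentity elements fixing ω
  set f : Ω → Finset X := fun ω => Finset.univ.filter (fun y => y ≠ 1 ∧ y • ω = ω) with hf
  have hfcard : ∀ ω, (f ω).card = m - 1 := by
    intro ω
    have h1 : (Finset.univ.filter (fun y : X => y • ω = ω)).card = m := by
      rw [← Fintype.card_subtype]
      rw [← hstabcard ω]
      exact Fintype.card_congr (Equiv.subtypeEquivRight
        (fun y => (MulAction.mem_stabilizer_iff).symm))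
    have h2 : f ω = (Finset.univ.filter (fun y : X => y • ω = ω)).erase 1 := by
      ext y
      simp [hf, Finset.mem_erase, and_comm]
    rw [h2, Finset.card_erase_of_mem (by simp), h1]
  set P : Finset X := Finset.univ.biUnion f with hP
  have hPcard : P.card = Fintype.card Ω * (m - 1) := by
    rw [hP, Finset.card_biUnion]
    · simp [hfcard, Finset.card_univ]
    · intro ω _ ω' _ hne
      rw [Function.onFun, Finset.disjoint_left]
      intro y hy hy'
      rw [hf] at hy hy'
      simp only [Finset.mem_filter, Finset.mem_univ, true_and] at hy hy'
      exact hne (hfix1 y hy.1 ω ω' hy.2 hy'.2)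
  set GF : Finset X := Finset.univ.filter (fun y => y ∈ G) with hGF
  have hGFcard : GF.card = Fintype.card Ω := by
    rw [hGF, ← Fintype.card_subtype]
    have hbij : Function.Bijective (fun g : {y : X // y ∈ G} => (g.1 : X) • α) := by
      constructor
      · intro g g' hgg
        obtain ⟨u, -, huniq⟩ := hreg α ((g'.1 : X) • α)
        have e1 := huniq ⟨g.1, g.2⟩ hgg
        have e2 := huniq ⟨g'.1, g'.2⟩ rfl
        have : (⟨g.1, g.2⟩ : G) = ⟨g'.1, g'.2⟩ := by rw [e1, e2]
        exact Subtype.ext (congrArg Subtype.val this)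
      · intro β
        obtain ⟨g, hg, -⟩ := hreg α β
        exact ⟨⟨g.1, g.2⟩, hg⟩
    exact Fintype.card_of_bijective hbij
  have hdisjGP : Disjoint GF P := by
    rw [Finset.disjoint_left]
    intro y hyG hyP
    obtain ⟨ω, -, hmem⟩ := Finset.mem_biUnion.mp hyP
    rw [hf] at hmem
    simp only [Finset.mem_filter, Finset.mem_univ, true_and] at hmem
    rw [hGF, Finset.mem_filter] at hyG
    have := hsemireg ⟨y, hyG.2⟩ ω hmem.2
    exact hmem.1 (by simpa [Subtype.ext_iff] using this)
  have hXcard : Fintype.card X = Fintype.card Ω * m := by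
    have horb : (MulAction.orbit X α : Set Ω) = Set.univ := by
      ext ω
      simp only [Set.mem_univ, iff_true]
      obtain ⟨c, hc⟩ := htrans.exists_smul_eq α ω
      exact ⟨c, hc⟩
    have := MulAction.card_orbit_mul_card_stabilizer_eq_card_group X α
    rw [hstabcard α] at this
    rw [← this]
    congr 1
    exact Fintype.card_congr ((Equiv.setCongr horb).trans (Equiv.Set.univ Ω))
  have hunion : GF ∪ P = Finset.univ := by
    apply Finset.eq_univ_of_card
    rw [Finset.card_union_of_disjoint hdisjGP, hGFcard, hPcard, hXcard]
    have hm1 : m - 1 + 1 = m := Nat.succ_pred_eq_of_pos hmpos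
    calc Fintype.card Ω + Fintype.card Ω * (m - 1)
        = Fintype.card Ω * ((m - 1) + 1) := by ring
      _ = Fintype.card Ω * m := by rw [hm1]
  have hfpf : ∀ y : X, (∀ ω : Ω, y • ω ≠ ω) → y ∈ G := by
    intro y hy
    have hmem : y ∈ GF ∪ P := hunion ▸ Finset.mem_univ y
    rcases Finset.mem_union.mp hmem with h | h
    · exact (Finset.mem_filter.mp h).2
    · obtain ⟨ω, -, hmem'⟩ := Finset.mem_biUnion.mp h
      rw [hf] at hmem'
      simp only [Finset.mem_filter, Finset.mem_univ, true_and] at hmem'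
      exact absurd hmem'.2 (hy ω)
  -- G is normal
  have hGnorm : G.Normal := by
    constructor
    intro g hg x
    by_cases hg1 : g = 1
    · simpa [hg1] using G.one_mem
    · apply hfpf
      intro ω h
      apply hg1
      have h2 : g • (x⁻¹ • ω) = x⁻¹ • ω := by
        have := congrArg (x⁻¹ • ·) h
        simpa [mul_smul] using this
      have := hsemireg ⟨g, hg⟩ (x⁻¹ • ω) h2
      simpa [Subtype.ext_iff] using this
  -- the central element z = a ^ (2n)
  have ha_pow : a ^ (4 * n) = 1 := by rw [← ha4]; exact pow_orderOf_eq_one a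
  have hz_ne : a ^ (2 * n) ≠ 1 := by
    intro h
    have := orderOf_dvd_of_pow_eq_one h
    rw [ha4] at this
    have := Nat.le_of_dvd (by omega) this
    omega
  have hconj : ∀ k : ℕ, b⁻¹ * a ^ k * b = (b⁻¹ * a * b) ^ k := by
    intro k
    induction k with
    | zero => simp
    | succ k ih => rw [pow_succ, pow_succ, ← ih]; group
  have hzcen : ∀ g : G, g * a ^ (2 * n) = a ^ (2 * n) * g := by
    have hsub : Subgroup.closure {a, b} ≤ Subgroup.centralizer {a ^ (2 * n)} := by
      rw [Subgroup.closure_le]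
      rintro g hg
      simp only [Set.mem_insert_iff, Set.mem_singleton_iff] at hg
      rcases hg with rfl | rfl
      · rw [SetLike.mem_coe, Subgroup.mem_centralizer_iff]
        intro h hh
        rw [Set.mem_singleton_iff] at hh
        subst hh
        exact ((Commute.refl g).pow_left (2 * n)).eq
      · rw [SetLike.mem_coe, Subgroup.mem_centralizer_iff]
        intro h hh
        rw [Set.mem_singleton_iff] at hh
        subst hh
        have key : g⁻¹ * a ^ (2 * n) * g = a ^ (2 * n) := by
          rw [hconj, hrel, ← pow_mul]
          obtain ⟨k, rfl⟩ : ∃ k, n = k + 3 := ⟨n - 3, by omega⟩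
          have e1 : (2 * (k + 3) - 1) * (2 * (k + 3)) =
              (4 * (k + 3)) * (k + 2) + 2 * (k + 3) := by
            have h5 : 2 * (k + 3) - 1 = 2 * k + 5 := by omega
            rw [h5]; ring
          rw [e1, pow_add, pow_mul, ha_pow, one_pow, one_mul]
        calc a ^ (2 * n) * g = g * (g⁻¹ * a ^ (2 * n) * g) := by group
        _ = g * a ^ (2 * n) := by rw [key]
    intro g
    have hg : g ∈ Subgroup.centralizer {a ^ (2 * n)} := by
      apply hsub
      rw [hgen]; trivial
    exact (Subgroup.mem_centralizer_iff.mp hg _ (Set.mem_singleton _)).symm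
  have hzc : a ^ (2 * n) ∈ Subgroup.center G := Subgroup.mem_center_iff.mpr hzcen
  -- the image of the center of G in X is a normal subgroup
  set M : Subgroup X := (Subgroup.center G).map G.subtype with hM
  have hMnorm : M.Normal := by
    constructor
    intro mX hmem x
    obtain ⟨c, hc, rfl⟩ := hmem
    have hcx : x * (c : X) * x⁻¹ ∈ G := hGnorm.conj_mem _ c.2 x
    rw [SetLike.mem_coe] at hc
    refine ⟨⟨x * (c : X) * x⁻¹, hcx⟩, ?_, rfl⟩
    rw [SetLike.mem_coe, Subgroup.mem_center_iff]
    intro d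
    apply Subtype.ext
    show (d : X) * (x * (c : X) * x⁻¹) = (x * (c : X) * x⁻¹) * (d : X)
    have hd' : x⁻¹ * (d : X) * x ∈ G := hGnorm.conj_mem' _ d.2 x
    have hcd : (c : X) * (x⁻¹ * (d : X) * x) = (x⁻¹ * (d : X) * x) * (c : X) := by
      have h1 := Subgroup.mem_center_iff.mp hc ⟨x⁻¹ * (d : X) * x, hd'⟩
      exact (congrArg Subtype.val h1).symm
    calc (d : X) * (x * (c : X) * x⁻¹)
        = x * ((x⁻¹ * (d : X) * x) * (c : X)) * x⁻¹ := by group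
      _ = x * ((c : X) * (x⁻¹ * (d : X) * x)) * x⁻¹ := by rw [← hcd]
      _ = (x * (c : X) * x⁻¹) * (d : X) := by group
  haveI := hMnorm
  -- the orbit of α under M is a block
  set B : Set Ω := MulAction.orbit M α with hBdef
  have hblockB : MulAction.IsBlock X B := MulAction.IsBlock.orbit_of_normal α
  have hzM : ((a ^ (2 * n) : G) : X) ∈ M :=
    ⟨a ^ (2 * n), hzc, rfl⟩
  have hzsmul : ((a ^ (2 * n) : G) : X) • α ≠ α := by
    intro h
    exact hz_ne (hsemireg _ α h)
  have hnt : B.Nontrivial := by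
    refine ⟨((a ^ (2 * n) : G) : X) • α, ?_, α, MulAction.mem_orbit_self α, hzsmul⟩
    exact MulAction.mem_orbit_iff.mpr ⟨⟨_, hzM⟩, rfl⟩
  have hbnotin : ((b : X)) • α ∉ B := by
    intro hmem
    obtain ⟨⟨mX, hmX⟩, hmeq⟩ := MulAction.mem_orbit_iff.mp hmem
    obtain ⟨c, hc, rfl⟩ := hmX
    have hceq : ((c : X)) • α = (b : X) • α := hmeq
    have hbc : b = c := by
      obtain ⟨u, -, huniq⟩ := hreg α ((b : X) • α)
      rw [huniq b rfl, huniq c hceq]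
    have hcb : b ∈ Subgroup.center G := hbc ▸ hc
    have hab : a * b = b * a := Subgroup.mem_center_iff.mp hcb a
    have h1 : a ^ (2 * n - 1) = a := by
      rw [← hrel]
      calc b⁻¹ * a * b = b⁻¹ * (a * b) := by group
      _ = b⁻¹ * (b * a) := by rw [hab]
      _ = a := by group
    have h2 : a ^ (2 * n - 2) = 1 := by
      have e : 2 * n - 1 = (2 * n - 2) + 1 := by omega
      rw [e, pow_succ] at h1
      have := mul_right_cancel (b := a) (a := a ^ (2 * n - 2)) (c := 1) (by rw [one_mul]; exact h1)
      exact this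
    have := orderOf_dvd_of_pow_eq_one h2
    rw [ha4] at this
    have := Nat.le_of_dvd (by omega) this
    omega
  have huniv := hB B hblockB hnt
  rw [huniv] at hbnotin
  exact hbnotin (Set.mem_univ _)
end
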